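/- arXiv:1903.12371 — 8 statements merged into one kernel-verified Lean document; each statement's English description precedes it below -/
import Mathlib

section
/- Fix a maximum matching ℳ of the bipartite graph Γ of 𝒜. If the pair (𝒜, ℋ) is structurally observable, then for every left node v left unmatched by ℳ, the contraction associated with v contains at least one state that is measured. -/
open Matrix

/-- Edge relation of the digraph of a pattern matrix: edge from `x_j` to `x_i` iff `𝒜 i j = 1`. -/
def digraphRel {n : ℕ} (𝒜 : Matrix (Fin n) (Fin n) Bool) : Fin n → Fin n → Prop :=
  fun j i => 𝒜 i j = true

/-- A state `j` is measured iff some row of the output pattern has a `1` in column `j`. -/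
def Measured {n : ℕ} {ρ : Type*} (ℋ : Matrix ρ (Fin n) Bool) (j : Fin n) : Prop :=
  ∃ i, ℋ i j = true

/-- A state node is Y-connected: a directed path to a measured state. -/
def YConnected {n : ℕ} {ρ : Type*} (𝒜 : Matrix (Fin n) (Fin n) Bool)
    (ℋ : Matrix ρ (Fin n) Bool) (x : Fin n) : Prop :=
  ∃ x', Relation.ReflTransGen (digraphRel 𝒜) x x' ∧ Measured ℋ x'

/-- Observability matrix stacking `H, HA, …, HA^(n-1)`. -/
noncomputable def obsMatrix {n : ℕ} {ρ : Type*} (A : Matrix (Fin n) (Fin n) ℝ)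
    (H : Matrix ρ (Fin n) ℝ) : Matrix (Fin n × ρ) (Fin n) ℝ :=
  Matrix.of fun p j => (H * A ^ (p.1 : ℕ)) p.2 j

/-- Structural observability of a pair of patterns. -/
def StructurallyObservable {n : ℕ} {ρ : Type*} (𝒜 : Matrix (Fin n) (Fin n) Bool)
    (ℋ : Matrix ρ (Fin n) Bool) : Prop :=
  ∃ (A : Matrix (Fin n) (Fin n) ℝ) (H : Matrix ρ (Fin n) ℝ),
    (∀ i j, 𝒜 i j = false → A i j = 0) ∧
    (∀ i j, ℋ i j = false → H i j = 0) ∧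
    (obsMatrix A H).rank = n

/-- Mutual reachability. -/
def SameSCC {V : Type*} (E : V → V → Prop) (u v : V) : Prop :=
  Relation.ReflTransGen E u v ∧ Relation.ReflTransGen E v u

/-- Strongly connected component: a nonempty, mutually reachable, maximal node set. -/
def IsSCC {V : Type*} (E : V → V → Prop) (S : Set V) : Prop :=
  S.Nonempty ∧ (∀ u ∈ S, ∀ v ∈ S, SameSCC E u v) ∧
    ∀ u v, v ∈ S → SameSCC E u v → u ∈ S

/-- Parent SCC: an SCC with no outgoing edge. -/
def IsParentSCC {V : Type*} (E : V → V → Prop) (S : Set V) : Prop :=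
  IsSCC E S ∧ ∀ u ∈ S, ∀ v, E u v → v ∈ S

/-- A matching of the bipartite graph of `𝒜`: edges `(left column j, right row i)`
with `𝒜 i j = 1`, no two sharing an endpoint. -/
def IsMatching {n : ℕ} (𝒜 : Matrix (Fin n) (Fin n) Bool)
    (M : Finset (Fin n × Fin n)) : Prop :=
  (∀ e ∈ M, 𝒜 e.2 e.1 = true) ∧
    ∀ e ∈ M, ∀ f ∈ M, e ≠ f → e.1 ≠ f.1 ∧ e.2 ≠ f.2

/-- Maximum matching of the bipartite graph of `𝒜`. -/
def IsMaxMatching {n : ℕ} (𝒜 : Matrix (Fin n) (Fin n) Bool)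
    (M : Finset (Fin n × Fin n)) : Prop :=
  IsMatching 𝒜 M ∧ ∀ M', IsMatching 𝒜 M' → M'.card ≤ M.card

/-- A left node `v` is unmatched by `M`. -/
def UnmatchedLeft {n : ℕ} (M : Finset (Fin n × Fin n)) (v : Fin n) : Prop :=
  ∀ e ∈ M, e.1 ≠ v

/-- One alternating step between left nodes: a non-matching edge from `u` to a right
node `r` followed by the matching edge from `r` back to a left node `w`. -/
def AltStep {n : ℕ} (𝒜 : Matrix (Fin n) (Fin n) Bool) (M : Finset (Fin n × Fin n))
    (u w : Fin n) : Prop :=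
  ∃ r : Fin n, 𝒜 r u = true ∧ (u, r) ∉ M ∧ (w, r) ∈ M

/-- The contraction associated with an unmatched left node `v`: all left nodes
reachable from `v` by `M`-alternating paths (including `v`). -/
def contractionOf {n : ℕ} (𝒜 : Matrix (Fin n) (Fin n) Bool)
    (M : Finset (Fin n × Fin n)) (v : Fin n) : Set (Fin n) :=
  {u | Relation.ReflTransGen (AltStep 𝒜 M) v u}

/-- Term rank of a pattern: the maximum number of `1`-entries, no two in the same
row or column. -/
noncomputable def termRank {m n : Type*} [Fintype m] [Fintype n]
    (A : Matrix m n Bool) : ℕ :=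
  sSup {k : ℕ | ∃ (r : Fin k → m) (c : Fin k → n),
    Function.Injective r ∧ Function.Injective c ∧ ∀ i, A (r i) (c i) = true}

/-- A cycle of the digraph of `𝒜`, as a nonempty duplicate-free list of state nodes. -/
def IsCycleList {n : ℕ} (𝒜 : Matrix (Fin n) (Fin n) Bool) (c : List (Fin n)) : Prop :=
  c ≠ [] ∧ c.Nodup ∧ c.Chain' (digraphRel 𝒜) ∧
    ∀ a ∈ c.head?, ∀ b ∈ c.getLast?, digraphRel 𝒜 b a

/-- A directed path of the system digraph through state nodes `c` ending at the
output node `y`. -/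
def IsYPathTo {n p : ℕ} (𝒜 : Matrix (Fin n) (Fin n) Bool) (ℋ : Matrix (Fin p) (Fin n) Bool)
    (c : List (Fin n)) (y : Fin p) : Prop :=
  c ≠ [] ∧ c.Nodup ∧ c.Chain' (digraphRel 𝒜) ∧ ∀ b ∈ c.getLast?, ℋ y b = true

/-- A family of pairwise node-disjoint cycles of `𝒢` and output-terminated paths of
`𝒢_sys` whose union covers every state node. Each family member is a list of state
nodes together with (for paths) the terminal output node. -/
def DisjointSpanningFamily {n p : ℕ} (𝒜 : Matrix (Fin n) (Fin n) Bool)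
    (ℋ : Matrix (Fin p) (Fin n) Bool) : Prop :=
  ∃ F : Finset (List (Fin n) × Option (Fin p)),
    (∀ e ∈ F, (e.2 = none ∧ IsCycleList 𝒜 e.1) ∨ ∃ y, e.2 = some y ∧ IsYPathTo 𝒜 ℋ e.1 y) ∧
    (∀ e ∈ F, ∀ f ∈ F, e ≠ f →
      (∀ x ∈ e.1, x ∉ f.1) ∧ ∀ y : Fin p, e.2 = some y → f.2 ≠ some y) ∧
    ∀ x : Fin n, ∃ e ∈ F, x ∈ e.1

section Aux

open List in
private lemma chain_concat_iff {α : Type*} {R : α → α → Prop} :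
    ∀ (l : List α) (a b : α), List.Chain R a (l ++ [b]) ↔
      List.Chain R a l ∧ R ((a :: l).getLast (List.cons_ne_nil _ _)) b := by
  intro l
  induction l with
  | nil => simp [List.Chain]
  | cons c t ih =>
    intro a b
    simp only [List.Chain] at ih ⊢
    simp only [List.cons_append, List.chain_cons, ih, List.getLast_cons_cons]
    tauto

private lemma chain_mono_mem {α : Type*} {R S : α → α → Prop} :
    ∀ (l : List α) (a : α), List.Chain R a l →
      (∀ x y, x ∈ a :: l → y ∈ l → R x y → S x y) → List.Chain S a l := by
  intro l
  induction l with
  | nil => intro a _ _; exact List.Chain.nil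
  | cons b t ih =>
    intro a h hmem
    rcases List.chain_cons.1 h with ⟨hab, ht⟩
    refine List.chain_cons.2 ⟨hmem a b (by simp) (by simp) hab, ih b ht ?_⟩
    intro x y hx hy hr
    exact hmem x y (List.mem_cons_of_mem a hx) (List.mem_cons_of_mem b hy) hr

private lemma matching_right_unique {n : ℕ} {𝒜 : Matrix (Fin n) (Fin n) Bool}
    {M : Finset (Fin n × Fin n)} (hM : IsMatching 𝒜 M)
    {a b : Fin n × Fin n} (ha : a ∈ M) (hb : b ∈ M) (h2 : a.2 = b.2) : a = b := by
  by_contra hne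
  exact (hM.2 a ha b hb hne).2 h2

private lemma matching_left_unique {n : ℕ} {𝒜 : Matrix (Fin n) (Fin n) Bool}
    {M : Finset (Fin n × Fin n)} (hM : IsMatching 𝒜 M)
    {a b : Fin n × Fin n} (ha : a ∈ M) (hb : b ∈ M) (h1 : a.1 = b.1) : a = b := by
  by_contra hne
  exact (hM.2 a ha b hb hne).1 h1

private lemma insert_matching {n : ℕ} {𝒜 : Matrix (Fin n) (Fin n) Bool}
    {M : Finset (Fin n × Fin n)} (hM : IsMatching 𝒜 M) {u r : Fin n}
    (h : 𝒜 r u = true) (hu : UnmatchedLeft M u) (hr : ∀ e ∈ M, e.2 ≠ r) :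
    ∃ M', IsMatching 𝒜 M' ∧ M.card < M'.card := by
  classical
  refine ⟨insert (u, r) M, ⟨?_, ?_⟩, ?_⟩
  · intro e he
    rcases Finset.mem_insert.1 he with rfl | he
    · exact h
    · exact hM.1 e he
  · intro e he f hf hne
    rcases Finset.mem_insert.1 he with rfl | he <;> rcases Finset.mem_insert.1 hf with rfl | hf
    · exact absurd rfl hne
    · exact ⟨fun h1 => hu f hf h1.symm, fun h2 => hr f hf h2.symm⟩
    · exact ⟨fun h1 => hu e he h1, fun h2 => hr e he h2⟩
    · exact hM.2 e he f hf hne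
  · have hnm : (u, r) ∉ M := fun hmem => hu _ hmem rfl
    rw [Finset.card_insert_of_notMem hnm]
    omega

private lemma aug {n : ℕ} (𝒜 : Matrix (Fin n) (Fin n) Bool) :
    ∀ (k : ℕ) (l : List (Fin n)) (M : Finset (Fin n × Fin n)) (v u r : Fin n),
      l.length ≤ k → IsMatching 𝒜 M → UnmatchedLeft M v →
      List.Chain (AltStep 𝒜 M) v l →
      (v :: l).getLast (List.cons_ne_nil _ _) = u →
      𝒜 r u = true → (∀ e ∈ M, e.2 ≠ r) →
      ∃ M', IsMatching 𝒜 M' ∧ M.card < M'.card := by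
  classical
  intro k
  induction k with
  | zero =>
    intro l M v u r hlen hM hv hchain hlast h𝒜r hr
    have hl : l = [] := List.eq_nil_of_length_eq_zero (Nat.le_zero.1 hlen)
    subst hl
    have huv : u = v := by simpa using hlast.symm
    subst huv
    exact insert_matching hM h𝒜r hv hr
  | succ k ih =>
    intro l M v u r hlen hM hv hchain hlast h𝒜r hr
    rcases l.eq_nil_or_concat' with rfl | ⟨l', w', rfl⟩
    · have huv : u = v := by simpa using hlast.symm
      subst huv
      exact insert_matching hM h𝒜r hv hr
    · have hw' : u = w' :=
        ((List.getLast_append_singleton (a := w') (v :: l')).symm.trans hlast).symm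
      subst hw'
      rcases (chain_concat_iff l' v u).1 hchain with ⟨hchain', hstep⟩
      set w := (v :: l').getLast (List.cons_ne_nil _ _) with hwdef
      obtain ⟨r', h𝒜r', hnm, hm⟩ := hstep
      by_cases humem : u ∈ v :: l'
      · rcases List.mem_cons.1 humem with rfl | humem'
        · exact absurd rfl (hv (u, r') hm)
        · obtain ⟨l₁, l₂, rfl⟩ := List.append_of_mem humem'
          have hchain₁ : List.Chain (AltStep 𝒜 M) v (l₁ ++ [u]) :=
            (List.isChain_cons_split.1 hchain').1
          have hlast₁ : (v :: (l₁ ++ [u])).getLast (List.cons_ne_nil _ _) = u :=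
            List.getLast_append_singleton (a := u) (v :: l₁)
          have hlen₁ : (l₁ ++ [u]).length ≤ k := by
            simp only [List.length_append, List.length_cons, List.length_singleton] at hlen ⊢
            omega
          exact ih (l₁ ++ [u]) M v u r hlen₁ hM hv hchain₁ hlast₁ h𝒜r hr
      · -- flip the last matching edge
        have hrr' : r ≠ r' := fun h => hr (u, r') hm h.symm
        have hurM : (u, r) ∉ M := fun h => hr _ h rfl
        set M₁ : Finset (Fin n × Fin n) := insert (u, r) (M.erase (u, r')) with hM₁def
        have hsubM : ∀ e ∈ M.erase (u, r'), e ∈ M := fun e he => Finset.mem_of_mem_erase he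
        have hM₁ : IsMatching 𝒜 M₁ := by
          constructor
          · intro e he
            rcases Finset.mem_insert.1 he with rfl | he
            · exact h𝒜r
            · exact hM.1 e (hsubM e he)
          · intro e he f hf hne
            rcases Finset.mem_insert.1 he with rfl | he <;>
              rcases Finset.mem_insert.1 hf with rfl | hf
            · exact absurd rfl hne
            · refine ⟨fun h1 => ?_, fun h2 => hr f (hsubM f hf) h2.symm⟩
              exact (Finset.mem_erase.1 hf).1
                (matching_left_unique hM (hsubM f hf) hm h1.symm)
            · refine ⟨fun h1 => ?_, fun h2 => hr e (hsubM e he) h2⟩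
              exact (Finset.mem_erase.1 he).1 (matching_left_unique hM (hsubM e he) hm h1)
            · exact hM.2 e (hsubM e he) f (hsubM f hf) hne
        have hcard₁ : M₁.card = M.card := by
          have h1 : (u, r) ∉ M.erase (u, r') := fun h => hurM (hsubM _ h)
          have h2 : 0 < M.card := Finset.card_pos.2 ⟨_, hm⟩
          rw [hM₁def, Finset.card_insert_of_notMem h1, Finset.card_erase_of_mem hm]
          omega
        have hvu : v ≠ u := fun h => humem (h ▸ (List.mem_cons_self (a := v)))
        have hv₁ : UnmatchedLeft M₁ v := by
          intro e he
          rcases Finset.mem_insert.1 he with rfl | he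
          · exact fun h => hvu h.symm
          · exact hv e (hsubM e he)
        have hchain₁ : List.Chain (AltStep 𝒜 M₁) v l' := by
          refine chain_mono_mem l' v hchain' ?_
          rintro x y hx hy ⟨s, hs1, hs2, hs3⟩
          have hxu : x ≠ u := fun h => humem (h ▸ hx)
          have hyu : y ≠ u := fun h => humem (h ▸ List.mem_cons_of_mem v hy)
          refine ⟨s, hs1, ?_, ?_⟩
          · intro hmem
            rcases Finset.mem_insert.1 hmem with heq | hmem
            · exact hxu (congrArg Prod.fst heq)
            · exact hs2 (hsubM _ hmem)
          · exact Finset.mem_insert_of_mem (Finset.mem_erase.2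
              ⟨fun heq => hyu (congrArg Prod.fst heq), hs3⟩)
        have hr'₁ : ∀ e ∈ M₁, e.2 ≠ r' := by
          intro e he
          rcases Finset.mem_insert.1 he with rfl | he
          · exact hrr'
          · intro h2
            exact (Finset.mem_erase.1 he).1 (matching_right_unique hM (hsubM e he) hm h2)
        have hlen₁ : l'.length ≤ k := by
          simp only [List.length_append, List.length_singleton] at hlen
          omega
        obtain ⟨M', hM', hlt⟩ := ih l' M₁ v w r' hlen₁ hM₁ hv₁ hchain₁ rfl h𝒜r' hr'₁
        exact ⟨M', hM', by omega⟩

private lemma neighbor_matched {n : ℕ} {𝒜 : Matrix (Fin n) (Fin n) Bool}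
    {M : Finset (Fin n × Fin n)} (hM : IsMaxMatching 𝒜 M) {v u r : Fin n}
    (hv : UnmatchedLeft M v) (hu : u ∈ contractionOf 𝒜 M v) (h : 𝒜 r u = true) :
    ∃ w ∈ contractionOf 𝒜 M v, (w, r) ∈ M := by
  classical
  by_cases hm : ∃ e ∈ M, e.2 = r
  · obtain ⟨e, hwm, h2⟩ := hm
    have hwm' : (e.1, r) ∈ M := by rw [← h2]; simpa using hwm
    by_cases hur : (u, r) ∈ M
    · exact ⟨u, hu, hur⟩
    · exact ⟨e.1, Relation.ReflTransGen.tail hu ⟨r, h, hur, hwm'⟩, hwm'⟩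
  · push_neg at hm
    obtain ⟨l, hc, hl⟩ := List.exists_isChain_cons_of_relationReflTransGen hu
    obtain ⟨M', hM', hlt⟩ := aug 𝒜 l.length l M v u r le_rfl hM.1 hv hc hl h hm
    exact absurd (hM.2 M' hM') (by omega)

end Aux


/-- If `(𝒜, ℋ)` is structurally observable then, for a fixed maximum
matching `M`, every contraction of an unmatched left node contains a measured state. -/
theorem stmt1 {n p : ℕ} (𝒜 : Matrix (Fin n) (Fin n) Bool)
    (M : Finset (Fin n × Fin n)) (hM : IsMaxMatching 𝒜 M)
    (ℋ : Matrix (Fin p) (Fin n) Bool)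
    (hobs : StructurallyObservable 𝒜 ℋ) :
    ∀ v, UnmatchedLeft M v → ∃ u ∈ contractionOf 𝒜 M v, Measured ℋ u := by
  classical
  intro v hv
  by_contra hcon
  push_neg at hcon
  obtain ⟨A, H, hA0, hH0, hrank⟩ := hobs
  set S : Finset (Fin n) := Finset.univ.filter (fun u => u ∈ contractionOf 𝒜 M v) with hSdef
  have hmemS : ∀ u, u ∈ S ↔ u ∈ contractionOf 𝒜 M v := by intro u; simp [hSdef]
  set N : Finset (Fin n) := Finset.univ.filter (fun r => ∃ j ∈ S, 𝒜 r j = true) with hNdef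
  have hmemN : ∀ r, r ∈ N ↔ ∃ j ∈ S, 𝒜 r j = true := by intro r; simp [hNdef]
  have hvS : v ∈ S := (hmemS v).2 Relation.ReflTransGen.refl
  -- counting : N.card < S.card
  have hwchoice : ∀ r, r ∈ N → ∃ w, w ∈ S ∧ (w, r) ∈ M := by
    intro r hr
    obtain ⟨j, hj, h𝒜⟩ := (hmemN r).1 hr
    obtain ⟨w, hw, hwm⟩ := neighbor_matched hM hv ((hmemS j).1 hj) h𝒜
    exact ⟨w, (hmemS w).2 hw, hwm⟩
  choose φ hφS hφM using hwchoice
  have hcardlt : N.card < S.card := by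
    have h1 : N.card ≤ (S.erase v).card := by
      refine Finset.card_le_card_of_injOn
        (fun r => if h : r ∈ N then φ r h else v) ?_ ?_
      · intro r hr
        have hrN : r ∈ N := by simpa using hr
        simp only [dif_pos hrN]
        refine Finset.mem_erase.2 ⟨fun h => ?_, hφS r hr⟩
        exact hv (φ r hr, r) (hφM r hr) h
      · intro r hr r' hr' heq
        rw [Finset.mem_coe] at hr hr'
        simp only [dif_pos hr, dif_pos hr'] at heq
        have := matching_left_unique hM.1 (hφM r hr) (hφM r' hr') heq
        exact congrArg Prod.snd this
    have h2 : (S.erase v).card < S.card := Finset.card_erase_lt_of_mem hvS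
    omega
  -- kernel vector for the restricted matrix
  set B : Matrix {r // r ∈ N} {j // j ∈ S} ℝ := fun r j => A r.1 j.1 with hBdef
  have hnotinj : ¬ Function.Injective B.mulVecLin := by
    intro hinj
    have hle := LinearMap.finrank_le_finrank_of_injective hinj
    rw [Module.finrank_fintype_fun_eq_card, Module.finrank_fintype_fun_eq_card] at hle
    rw [Fintype.card_coe, Fintype.card_coe] at hle
    omega
  obtain ⟨f, hfker, hfne⟩ :=
    (Submodule.ne_bot_iff _).1 (fun h => hnotinj (LinearMap.ker_eq_bot.1 h))
  have hBf : B.mulVec f = 0 := hfker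
  set x : Fin n → ℝ := fun j => if h : j ∈ S then f ⟨j, h⟩ else 0 with hxdef
  have hsum_eq : ∀ r : Fin n, ∑ j, A r j * x j = ∑ j ∈ S, A r j * x j := by
    intro r
    refine (Finset.sum_subset (Finset.subset_univ S) ?_).symm
    intro j _ hj
    rw [hxdef]
    simp [dif_neg hj]
  have hxA : A.mulVec x = 0 := by
    funext r
    show ∑ j, A r j * x j = 0
    rw [hsum_eq r]
    by_cases hrN : r ∈ N
    · have := congrFun hBf ⟨r, hrN⟩
      have hB : (B.mulVec f) ⟨r, hrN⟩ = ∑ j ∈ S, A r j * x j := by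
        show ∑ j : {j // j ∈ S}, B ⟨r, hrN⟩ j * f j = _
        rw [← Finset.sum_coe_sort S (fun j => A r j * x j)]
        refine Finset.sum_congr rfl ?_
        intro j _
        have hxj : x j.1 = f j := by rw [hxdef]; simp [dif_pos j.2]
        rw [hxj, hBdef]
      rw [← hB, this]
      rfl
    · refine Finset.sum_eq_zero ?_
      intro j hj
      have h𝒜 : 𝒜 r j = false := by
        by_contra hb
        exact hrN ((hmemN r).2 ⟨j, hj, by simpa using hb⟩)
      rw [hA0 r j h𝒜, zero_mul]
  have hxH : H.mulVec x = 0 := by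
    funext i
    show ∑ j, H i j * x j = 0
    refine Finset.sum_eq_zero ?_
    intro j _
    by_cases hj : j ∈ S
    · have hnm : ¬ Measured ℋ j := hcon j ((hmemS j).1 hj)
      have hfalse : ℋ i j = false := by
        by_contra hb
        exact hnm ⟨i, by simpa using hb⟩
      rw [hH0 i j hfalse, zero_mul]
    · rw [hxdef]
      simp [dif_neg hj]
  have hker : ∀ k : ℕ, H.mulVec ((A ^ k).mulVec x) = 0 := by
    intro k
    cases k with
    | zero => simpa using hxH
    | succ k =>
      have : (A ^ (k + 1)).mulVec x = 0 := by
        rw [pow_succ, ← Matrix.mulVec_mulVec, hxA, Matrix.mulVec_zero]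
      rw [this, Matrix.mulVec_zero]
  have hobsx : (obsMatrix A H).mulVec x = 0 := by
    funext q
    obtain ⟨k, i⟩ := q
    have h1 : (obsMatrix A H).mulVec x (k, i) = ((H * A ^ (k : ℕ)).mulVec x) i := rfl
    rw [h1, ← Matrix.mulVec_mulVec, hker]
    rfl
  have hful : LinearMap.ker (obsMatrix A H).mulVecLin = ⊥ := by
    have h1 := LinearMap.finrank_range_add_finrank_ker (obsMatrix A H).mulVecLin
    rw [Module.finrank_fintype_fun_eq_card, Fintype.card_fin] at h1
    have h2 : (obsMatrix A H).rank = n := hrank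
    rw [Matrix.rank] at h2
    rw [h2] at h1
    exact Submodule.finrank_eq_zero.1 (by omega)
  have hxker : x ∈ LinearMap.ker (obsMatrix A H).mulVecLin := by
    rw [LinearMap.mem_ker, Matrix.mulVecLin_apply, hobsx]
  rw [hful, Submodule.mem_bot] at hxker
  apply hfne
  funext j
  have := congrFun hxker j.1
  rw [hxdef] at this
  simpa [dif_pos j.2] using this
end

section
/- If the pair (𝒜, ℋ) is structurally observable, then every parent SCC of the digraph 𝒢 of 𝒜 contains at least one measured state. -/
open Matrix

/-- If `(𝒜, ℋ)` is structurally observable then every parent SCC of the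
digraph of `𝒜` contains a measured state. -/
theorem stmt2 {n p : ℕ} (𝒜 : Matrix (Fin n) (Fin n) Bool)
    (ℋ : Matrix (Fin p) (Fin n) Bool)
    (hobs : StructurallyObservable 𝒜 ℋ) :
    ∀ S : Set (Fin n), IsParentSCC (digraphRel 𝒜) S → ∃ u ∈ S, Measured ℋ u := by
  intro S hS
  by_contra h
  push_neg at h
  obtain ⟨A, H, hA, hH, hrank⟩ := hobs
  obtain ⟨⟨⟨j, hj⟩, _, _⟩, hparent⟩ := hS
  have hHcol : ∀ i (m : Fin n), m ∈ S → H i m = 0 := by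
    intro i m hm
    apply hH
    by_contra hne
    exact h m hm ⟨i, by simpa using hne⟩
  have hAcol : ∀ (i m : Fin n), m ∈ S → i ∉ S → A i m = 0 := by
    intro i m hm hi
    apply hA
    by_contra hne
    exact hi (hparent m hm i (by simpa [digraphRel] using hne))
  have key : ∀ k : ℕ, ∀ i, ∀ m ∈ S, (H * A ^ k) i m = 0 := by
    intro k
    induction k with
    | zero => intro i m hm; simp [hHcol i m hm]
    | succ k ih =>
      intro i m hm
      rw [pow_succ, ← Matrix.mul_assoc, Matrix.mul_apply]
      apply Finset.sum_eq_zero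
      intro x _
      by_cases hx : x ∈ S
      · rw [ih i x hx, zero_mul]
      · rw [hAcol x m hm hx, mul_zero]
  have hcol : ∀ q, obsMatrix A H q j = 0 := fun q => key q.1 q.2 j hj
  have hker : (obsMatrix A H).mulVecLin (Pi.single j 1) = 0 := by
    ext q
    simp [Matrix.mulVecLin_apply, Matrix.mulVec_single, hcol]
  have hne0 : (Pi.single j 1 : Fin n → ℝ) ≠ 0 := by
    intro h0
    have := congrFun h0 j
    simp at this
  have hkerpos : 0 < Module.finrank ℝ (LinearMap.ker (obsMatrix A H).mulVecLin) := by
    rw [Module.finrank_pos_iff]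
    exact Submodule.nontrivial_iff_ne_bot.mpr (fun hb => hne0 (by
      simpa [hb] using (LinearMap.mem_ker.mpr hker : Pi.single j 1 ∈ LinearMap.ker (obsMatrix A H).mulVecLin)))
  have hsum := LinearMap.finrank_range_add_finrank_ker (obsMatrix A H).mulVecLin
  rw [Module.finrank_pi] at hsum
  have : (obsMatrix A H).rank = Module.finrank ℝ (LinearMap.range (obsMatrix A H).mulVecLin) := rfl
  simp only [Fintype.card_fin] at hsum
  omega
end

section
/- Every state node of the system digraph 𝒢_sys is Y-connected if and only if every parent SCC of the digraph 𝒢 of 𝒜 contains at least one measured state. -/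
open Matrix

/-- Every state node is Y-connected iff every parent SCC of the digraph
of `𝒜` contains a measured state. -/
theorem stmt5 {n p : ℕ} (𝒜 : Matrix (Fin n) (Fin n) Bool)
    (ℋ : Matrix (Fin p) (Fin n) Bool) :
    (∀ x, YConnected 𝒜 ℋ x) ↔
      ∀ S : Set (Fin n), IsParentSCC (digraphRel 𝒜) S → ∃ u ∈ S, Measured ℋ u := by
  classical
  set E := digraphRel 𝒜 with hE
  constructor
  · intro hYC S hS
    obtain ⟨⟨⟨u, hu⟩, _, _⟩, hpar⟩ := hS
    obtain ⟨x', hx', hm⟩ := hYC u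
    have key : ∀ a b, Relation.ReflTransGen E a b → a ∈ S → b ∈ S := by
      intro a b hab ha
      induction hab with
      | refl => exact ha
      | tail h e ih => exact hpar _ ih _ e
    exact ⟨x', key u x' hx' hu, hm⟩
  · intro hP x
    -- pick a node u reachable from x minimizing the size of its reachable set
    have : ∃ u, Relation.ReflTransGen E x u ∧
        ∀ v, Relation.ReflTransGen E u v → Relation.ReflTransGen E v u := by
      set f : Fin n → ℕ := fun u => {v | Relation.ReflTransGen E u v}.ncard with hf
      set s : Finset (Fin n) := Finset.univ.filter
        (fun u => Relation.ReflTransGen E x u) with hs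
      have hxs : x ∈ s := Finset.mem_filter.mpr ⟨Finset.mem_univ _, .refl⟩
      obtain ⟨u, hus, hmin⟩ := s.exists_min_image f ⟨x, hxs⟩
      have hxu : Relation.ReflTransGen E x u := by
        simpa [hs] using hus
      refine ⟨u, hxu, fun v huv => ?_⟩
      have hvs : v ∈ s := by simp [hs, hxu.trans huv]
      have hsub : {w | Relation.ReflTransGen E v w} ⊆ {w | Relation.ReflTransGen E u w} :=
        fun w hw => huv.trans hw
      have hle : f v ≤ f u :=
        Set.ncard_le_ncard hsub (Set.toFinite _)
      have heq : {w | Relation.ReflTransGen E v w} = {w | Relation.ReflTransGen E u w} :=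
        Set.eq_of_subset_of_ncard_le hsub (hmin v hvs) (Set.toFinite _)
      have : u ∈ {w | Relation.ReflTransGen E v w} := by
        rw [heq]; exact Relation.ReflTransGen.refl
      exact this
    obtain ⟨u, hxu, hback⟩ := this
    set S : Set (Fin n) := {w | SameSCC E u w} with hSdef
    have hSCC : IsParentSCC E S := by
      refine ⟨⟨⟨u, ⟨.refl, .refl⟩⟩, ?_, ?_⟩, ?_⟩
      · rintro a ⟨hua, hau⟩ b ⟨hub, hbu⟩
        exact ⟨hau.trans hub, hbu.trans hua⟩
      · rintro a b ⟨hub, hbu⟩ ⟨hab, hba⟩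
        exact ⟨hub.trans hba, hab.trans hbu⟩
      · rintro w ⟨huw, hwu⟩ v hwv
        have huv : Relation.ReflTransGen E u v := huw.trans (.single hwv)
        exact ⟨huv, hback v huv⟩
    obtain ⟨u', ⟨huu', _⟩, hm⟩ := hP S hSCC
    exact ⟨u', hxu.trans huu', hm⟩
end

section
/- Suppose the term rank of 𝒜 equals n (equivalently, the digraph 𝒢 of 𝒜 contains a family of pairwise node-disjoint cycles spanning all state nodes). Then an output pattern ℋ ∈ {0,1}^{p×n} with exactly one entry equal to 1 in each row makes the pair (𝒜, ℋ) structurally observable if and only if every parent SCC of 𝒢 contains a measured state; consequently, the minimum number of such measurement rows for which (𝒜, ℋ) is structurally observable equals the number of parent SCCs of 𝒢. -/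
open Matrix


attribute [local instance] Classical.propDecidable


lemma rank_eq_card_iff {m : Type*} [Fintype m] {n : ℕ} (M : Matrix m (Fin n) ℝ) :
    M.rank = n ↔ ∀ v : Fin n → ℝ, M *ᵥ v = 0 → v = 0 := by
  have h := LinearMap.finrank_range_add_finrank_ker (M.mulVecLin)
  rw [Module.finrank_pi ℝ] at h
  simp only [Fintype.card_fin] at h
  rw [Matrix.rank]
  constructor
  · intro hr v hv
    have : Module.finrank ℝ (LinearMap.ker M.mulVecLin) = 0 := by omega
    rw [Submodule.finrank_eq_zero] at this
    have hv' : v ∈ LinearMap.ker M.mulVecLin := by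
      simpa [Matrix.mulVecLin] using hv
    rw [this] at hv'
    simpa using hv'
  · intro hv
    have : LinearMap.ker M.mulVecLin = ⊥ := by
      ext v; simp only [LinearMap.mem_ker, Submodule.mem_bot]
      constructor
      · intro h'; exact hv v (by simpa [Matrix.mulVecLin] using h')
      · rintro rfl; simp
    rw [this] at h
    simpa using h

lemma necessity {n : ℕ} {ρ : Type*} [Fintype ρ] (𝒜 : Matrix (Fin n) (Fin n) Bool)
    (ℋ : Matrix ρ (Fin n) Bool) (S : Set (Fin n)) (hS : IsParentSCC (digraphRel 𝒜) S)
    (hnm : ∀ u ∈ S, ¬ Measured ℋ u) : ¬ StructurallyObservable 𝒜 ℋ := by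
  rintro ⟨A, H, hA, hH, hr⟩
  obtain ⟨j, hj⟩ := hS.1.1
  have key : ∀ k : ℕ, ∀ u ∈ S, ∀ i, (H * A ^ k) i u = 0 := by
    intro k
    induction k with
    | zero =>
      intro u hu i
      rw [pow_zero, Matrix.mul_one]
      apply hH
      have := hnm u hu
      simp only [Measured, not_exists] at this
      simpa using this i
    | succ k ih =>
      intro u hu i
      rw [pow_succ, ← Matrix.mul_assoc, Matrix.mul_apply]
      apply Finset.sum_eq_zero
      intro l _
      by_cases hl : A l u = 0
      · rw [hl, mul_zero]
      · have hedge : 𝒜 l u = true := by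
          by_contra h
          exact hl (hA l u (by simpa using h))
        have : l ∈ S := hS.2 u hu l hedge
        rw [ih l this i, zero_mul]
  rw [rank_eq_card_iff] at hr
  have hz : obsMatrix A H *ᵥ Pi.single j 1 = 0 := by
    funext q
    simp only [Matrix.mulVec, dotProduct, obsMatrix, Matrix.of_apply, Pi.zero_apply]
    rw [Finset.sum_eq_single j]
    · rw [key q.1 j hj q.2, zero_mul]
    · intro b _ hb; simp [Pi.single_eq_of_ne hb]
    · simp
  have := hr _ hz
  have : (Pi.single j 1 : Fin n → ℝ) j = 0 := by rw [this]; rfl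
  simp at this

lemma pbh {n : ℕ} {ρ : Type*} [Fintype ρ] (A : Matrix (Fin n) (Fin n) ℝ)
    (H : Matrix ρ (Fin n) ℝ)
    (hyp : ∀ (μ : ℂ) (v : Fin n → ℂ), v ≠ 0 →
      (A.map (Complex.ofRealHom)) *ᵥ v = μ • v → (H.map (Complex.ofRealHom)) *ᵥ v ≠ 0) :
    (obsMatrix A H).rank = n := by
  rcases Nat.eq_zero_or_pos n with hn | hn
  · subst hn
    rw [rank_eq_card_iff]
    intro v _
    funext i; exact absurd i.2 (by omega)
  rw [rank_eq_card_iff]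
  intro v hv
  by_contra hvne
  have hfin : ∀ k : Fin n, (H * A ^ (k : ℕ)) *ᵥ v = 0 := by
    intro k
    funext i
    have := congrFun hv (k, i)
    simpa [obsMatrix, Matrix.mulVec, dotProduct] using this
  have hlt : ∀ k : ℕ, k < n → (H * A ^ k) *ᵥ v = 0 := fun k hk => hfin ⟨k, hk⟩
  have hall : ∀ m : ℕ, (H * A ^ m) *ᵥ v = 0 := by
    intro m
    have hmonic := Matrix.charpoly_monic A
    have hqdeg : (Matrix.charpoly A).natDegree = n := by
      rw [Matrix.charpoly_natDegree_eq_dim]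
      exact Fintype.card_fin n
    have hAm : A ^ m = Polynomial.aeval A ((Polynomial.X ^ m : Polynomial ℝ) %ₘ Matrix.charpoly A) := by
      have h1 : (Polynomial.X ^ m : Polynomial ℝ) =
          (Polynomial.X ^ m : Polynomial ℝ) %ₘ Matrix.charpoly A +
            Matrix.charpoly A * ((Polynomial.X ^ m : Polynomial ℝ) /ₘ Matrix.charpoly A) :=
        (Polynomial.modByMonic_add_div _ _).symm
      have h2 := congrArg (Polynomial.aeval A) h1
      simpa [map_add, _root_.map_mul, map_pow, Matrix.aeval_self_charpoly] using h2
    have hdeg : ((Polynomial.X ^ m : Polynomial ℝ) %ₘ Matrix.charpoly A).natDegree < n := by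
      have := Polynomial.natDegree_modByMonic_lt (Polynomial.X ^ m : Polynomial ℝ) hmonic
        (fun h => by rw [h] at hqdeg; simp at hqdeg; omega)
      omega
    rw [hAm, Polynomial.aeval_eq_sum_range, Matrix.mul_sum]
    funext i
    simp only [Matrix.mulVec, dotProduct, Matrix.sum_apply, Finset.sum_mul,
      Pi.zero_apply]
    rw [Finset.sum_comm]
    apply Finset.sum_eq_zero
    intro k hk
    have hin : (k : ℕ) < n := by
      have := Finset.mem_range.mp hk
      omega
    have h3 := congrFun (hlt k hin) i
    simp only [Matrix.mulVec, dotProduct, Pi.zero_apply] at h3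
    calc ∑ j, (H * (Polynomial.X ^ m %ₘ A.charpoly).coeff k • A ^ k) i j * v j
        = ∑ j, (Polynomial.X ^ m %ₘ A.charpoly).coeff k * ((H * A ^ k) i j * v j) := by
          apply Finset.sum_congr rfl
          intro j _
          rw [Matrix.mul_smul]
          simp [Matrix.smul_apply, smul_eq_mul]
          ring
      _ = 0 := by rw [← Finset.mul_sum, h3, mul_zero]
  set f := Complex.ofRealHom with hf
  set B := A.map f with hB
  set G := H.map f with hG
  set w : Fin n → ℂ := fun i => f (v i) with hw
  have hwne : w ≠ 0 := by
    intro h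
    apply hvne
    funext i
    have := congrFun h i
    simpa [hw] using this
  have hwall : ∀ m : ℕ, (G * B ^ m) *ᵥ w = 0 := by
    intro m
    have hGB : G * B ^ m = (H * A ^ m).map f := by
      rw [Matrix.map_mul, hG]
      congr 1
      rw [hB]
      have := map_pow (f.mapMatrix : Matrix (Fin n) (Fin n) ℝ →+* Matrix (Fin n) (Fin n) ℂ) A m
      simpa [RingHom.mapMatrix_apply] using this.symm
    rw [hGB]
    funext i
    have := congrFun (hall m) i
    simp only [Matrix.mulVec, dotProduct, Matrix.map_apply, Pi.zero_apply] at this ⊢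
    calc ∑ j, f ((H * A ^ m) i j) * w j = f (∑ j, (H * A ^ m) i j * v j) := by
          rw [map_sum]
          apply Finset.sum_congr rfl
          intro j _
          rw [_root_.map_mul]
      _ = 0 := by rw [this]; simp
  -- the joint kernel
  set K : Submodule ℂ (Fin n → ℂ) := ⨅ (k : ℕ), LinearMap.ker ((G * B ^ k).mulVecLin) with hK
  have hmem : ∀ x : Fin n → ℂ, x ∈ K ↔ ∀ k : ℕ, (G * B ^ k) *ᵥ x = 0 := by
    intro x
    rw [hK]
    simp [Submodule.mem_iInf, Matrix.mulVecLin_apply]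
  have hwK : w ∈ K := (hmem w).mpr hwall
  have hinv : ∀ u ∈ K, B.mulVecLin u ∈ K := by
    intro u hu
    rw [hmem] at hu ⊢
    intro k
    simp only [Matrix.mulVecLin_apply]
    rw [Matrix.mulVec_mulVec, Matrix.mul_assoc, ← pow_succ]
    exact hu (k + 1)
  haveI : Nontrivial K := nontrivial_of_ne ⟨w, hwK⟩ 0 (by
    intro h
    apply hwne
    exact congrArg Subtype.val h)
  set e : Module.End ℂ K := (B.mulVecLin).restrict hinv with he
  obtain ⟨μ, hμ⟩ := Module.End.exists_eigenvalue e
  obtain ⟨u, hu⟩ := hμ.exists_hasEigenvector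
  have heig : B *ᵥ (u : Fin n → ℂ) = μ • (u : Fin n → ℂ) := by
    have h1 : e u = μ • u := Module.End.mem_eigenspace_iff.mp hu.1
    have h2 : (e u : Fin n → ℂ) = B.mulVecLin (u : Fin n → ℂ) := rfl
    have h3 := congrArg (Subtype.val) h1
    rw [h2] at h3
    simpa [Matrix.mulVecLin_apply] using h3
  have hune : (u : Fin n → ℂ) ≠ 0 := by
    intro h
    exact hu.2 (by exact Subtype.ext h)
  have hGu : G *ᵥ (u : Fin n → ℂ) = 0 := by
    have h0 := ((hmem _).mp u.2) 0
    simpa using h0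
  exact hyp μ u hune heig hGu






lemma sameCycle_pow_left' {n : ℕ} (σ : Equiv.Perm (Fin n)) (x : Fin n) (k : ℕ) :
    σ.SameCycle x ((σ ^ k) x) := ⟨k, by simp⟩

lemma sameCycle_symm_pow {n : ℕ} (σ : Equiv.Perm (Fin n)) (x : Fin n) (k : ℕ) :
    σ.SameCycle x ((σ.symm ^ k) x) := by
  refine ⟨-(k : ℤ), ?_⟩
  have h1 : σ ^ (-(k : ℤ)) = (σ ^ k)⁻¹ := by
    rw [_root_.zpow_neg, zpow_natCast]
  have h2 : (σ.symm ^ k : Equiv.Perm (Fin n)) = (σ ^ k)⁻¹ := by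
    rw [← inv_pow]; rfl
  rw [h1, h2]

lemma sameCycle_symm_one {n : ℕ} (σ : Equiv.Perm (Fin n)) (x : Fin n) :
    σ.SameCycle x (σ.symm x) := by
  have := sameCycle_symm_pow σ x 1
  rwa [pow_one] at this

/-- Around a pure weighted cycle, an eigenvector is nowhere zero and the
eigenvalue has modulus equal to the weight. -/
lemma cycle_all_ne {n : ℕ} (σ : Equiv.Perm (Fin n)) (v : Fin n → ℂ) (μ : ℂ) (w : ℝ)
    (hw : 0 < w) (x0 : Fin n) (hnz : v x0 ≠ 0)
    (hrel : ∀ i, σ.SameCycle x0 i → (w : ℂ) * v (σ.symm i) = μ * v i) :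
    μ ≠ 0 ∧ (∀ i, σ.SameCycle x0 i → v i ≠ 0) ∧ ‖μ‖ = w := by
  have hwC : (w : ℂ) ≠ 0 := by exact_mod_cast hw.ne'
  have hμ : μ ≠ 0 := by
    rintro rfl
    have h1 := hrel (σ x0) ⟨1, by simp⟩
    rw [zero_mul] at h1
    have h2 : v (σ.symm (σ x0)) = 0 := by
      rcases mul_eq_zero.mp h1 with h | h
      · exact absurd h hwC
      · exact h
    rw [Equiv.symm_apply_apply] at h2
    exact hnz h2
  have hall : ∀ i, σ.SameCycle x0 i → v i ≠ 0 := by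
    have key : ∀ k : ℕ, ∀ i, σ.SameCycle x0 i → (σ ^ k) i = x0 → v i ≠ 0 := by
      intro k
      induction k with
      | zero => intro i _ h; simp at h; rwa [h]
      | succ k ih =>
        intro i hc h
        have h' : (σ ^ k) (σ i) = x0 := by
          rw [← h, pow_succ, Equiv.Perm.mul_apply]
        have hcσ : σ.SameCycle x0 (σ i) := hc.trans ⟨1, by simp⟩
        have hvσ : v (σ i) ≠ 0 := ih (σ i) hcσ h'
        intro hvi
        apply hvσ
        have h1 := hrel (σ i) hcσ
        rw [Equiv.symm_apply_apply, hvi, mul_zero] at h1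
        rcases mul_eq_zero.mp h1.symm with h | h
        · exact absurd h hμ
        · exact h
    intro i hc
    obtain ⟨k, hk0, _, hk⟩ := Equiv.Perm.SameCycle.exists_pow_eq σ hc.symm
    exact key k i hc hk
  refine ⟨hμ, hall, ?_⟩
  set s := Finset.univ.filter (fun y => σ.SameCycle x0 y) with hs
  have hx0s : x0 ∈ s := by simp [hs, Equiv.Perm.SameCycle.refl]
  have hcard : s.card ≠ 0 := Finset.card_ne_zero_of_mem hx0s
  have hmem : ∀ y, y ∈ s ↔ σ.SameCycle x0 y := by intro y; simp [hs]
  have hprodeq : ∏ i ∈ s, ‖v (σ.symm i)‖ = ∏ i ∈ s, ‖v i‖ := by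
    exact Finset.prod_nbij' (f := fun i => ‖v (σ.symm i)‖)
      (g := fun i => ‖v i‖) (fun i => σ.symm i) (fun i => σ i)
      (fun i hi => by rw [hmem] at hi ⊢; exact hi.trans (sameCycle_symm_one σ i))
      (fun i hi => by rw [hmem] at hi ⊢; exact hi.trans ⟨1, by simp⟩)
      (fun i _ => by simp) (fun i _ => by simp) (fun i _ => rfl)
  have habs : ∀ i ∈ s, w * ‖v (σ.symm i)‖ = ‖μ‖ * ‖v i‖ := by
    intro i hi
    have := congrArg norm (hrel i ((hmem i).mp hi))
    simpa [Complex.norm_real, abs_of_pos hw] using this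
  have hP : (0:ℝ) < ∏ i ∈ s, ‖v i‖ := by
    apply Finset.prod_pos
    intro i hi
    exact norm_pos_iff.mpr (hall i ((hmem i).mp hi))
  have h1 : ∏ i ∈ s, (w * ‖v (σ.symm i)‖)
      = ∏ i ∈ s, (‖μ‖ * ‖v i‖) := Finset.prod_congr rfl habs
  rw [Finset.prod_mul_distrib, Finset.prod_mul_distrib, Finset.prod_const, Finset.prod_const,
    hprodeq] at h1
  have h2 : w ^ s.card = ‖μ‖ ^ s.card := mul_right_cancel₀ hP.ne' h1
  exact ((pow_left_inj₀ (norm_nonneg μ) hw.le hcard).mp h2.symm)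

/-- A weighted cycle receiving a single nonzero impulse at node `t`:
the eigen-relations force the eigenvector to be nowhere zero on the cycle. -/
lemma cycle_impulse {n : ℕ} (σ : Equiv.Perm (Fin n)) (v : Fin n → ℂ) (μ : ℂ) (w : ℝ)
    (hw : 0 < w) (hμ : μ ≠ 0) (t a : Fin n) (hva : v a ≠ 0)
    (hrel1 : ∀ i, σ.SameCycle t i → i ≠ t → (w : ℂ) * v (σ.symm i) = μ * v i)
    (hrelt : (w : ℂ) * v (σ.symm t) + v a = μ * v t) :
    ∀ i, σ.SameCycle t i → v i ≠ 0 := by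
  have hwC : (w : ℂ) ≠ 0 := by exact_mod_cast hw.ne'
  set c := Function.minimalPeriod σ t with hc
  have htper : t ∈ Function.periodicPts σ := by
    refine ⟨orderOf σ, orderOf_pos σ, ?_⟩
    show σ^[orderOf σ] t = t
    rw [← Equiv.Perm.coe_pow, pow_orderOf_eq_one]
    rfl
  have hc0 : 0 < c := Function.minimalPeriod_pos_of_mem_periodicPts htper
  have hcycle : (σ ^ c) t = t := by
    rw [Equiv.Perm.coe_pow]
    exact Function.iterate_minimalPeriod
  have hne_t : ∀ k, 0 < k → k < c → (σ ^ k) t ≠ t := by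
    intro k hk0 hkc h
    have : Function.IsPeriodicPt σ k t := by
      rw [Function.IsPeriodicPt, Function.IsFixedPt, ← Equiv.Perm.coe_pow] at *
      exact h
    have := this.minimalPeriod_le hk0
    omega
  have hsymm_ne_t : ∀ k, 0 < k → k < c → (σ.symm ^ k) t ≠ t := by
    intro k hk0 hkc h
    apply hne_t k hk0 hkc
    have h1 := congrArg (σ ^ k) h
    rw [show ((σ ^ k) ((σ.symm ^ k) t)) = t by
      have h2 : (σ.symm ^ k : Equiv.Perm (Fin n)) = (σ ^ k)⁻¹ := by rw [← inv_pow]; rfl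
      rw [h2]; exact Equiv.apply_symm_apply _ t] at h1
    exact h1.symm
  have hsymm_c : (σ.symm ^ c) t = t := by
    have h2 : (σ.symm ^ c : Equiv.Perm (Fin n)) = (σ ^ c)⁻¹ := by rw [← inv_pow]; rfl
    rw [h2]
    exact (Equiv.symm_apply_eq _).mpr hcycle.symm
  -- the chain around the cycle
  have chain : ∀ k, 1 ≤ k → k ≤ c → v ((σ.symm ^ k) t) = (μ / w) ^ (k - 1) * v (σ.symm t) := by
    intro k
    induction k with
    | zero => omega
    | succ k ih =>
      intro _ hk1
      rcases Nat.eq_zero_or_pos k with rfl | hk0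
      · simp
      · have hkc : k < c := by omega
        set i := (σ.symm ^ k) t with hi
        have hit : i ≠ t := hsymm_ne_t k hk0 hkc
        have hci : σ.SameCycle t i := sameCycle_symm_pow σ t k
        have h1 := hrel1 i hci hit
        have h2 : σ.symm i = (σ.symm ^ (k+1)) t := by
          rw [hi, pow_succ']
          rfl
        rw [h2] at h1
        have h3 := ih hk0 (by omega)
        have hv : v ((σ.symm ^ (k+1)) t) = (μ / w) * v i := by
          rw [div_mul_eq_mul_div, eq_div_iff hwC]
          linear_combination h1
        rw [hv, h3, ← mul_assoc, ← pow_succ']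
        congr 2
        omega
  have hvt : v t = (μ / w) ^ (c - 1) * v (σ.symm t) := by
    have := chain c hc0 le_rfl
    rwa [hsymm_c] at this
  have hs1 : v (σ.symm t) ≠ 0 := by
    intro h0
    rw [h0, mul_zero] at hvt
    rw [h0, mul_zero, zero_add, hvt, mul_zero] at hrelt
    exact hva hrelt
  have hfac : ∀ k, 1 ≤ k → k ≤ c → v ((σ.symm ^ k) t) ≠ 0 := by
    intro k h1k hkc
    rw [chain k h1k hkc]
    exact mul_ne_zero (pow_ne_zero _ (div_ne_zero hμ hwC)) hs1
  have hvt0 : v t ≠ 0 := by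
    rw [hvt]
    exact mul_ne_zero (pow_ne_zero _ (div_ne_zero hμ hwC)) hs1
  intro i hci
  obtain ⟨k, hk0, _, hk⟩ := Equiv.Perm.SameCycle.exists_pow_eq σ hci
  have hper : Function.IsPeriodicPt σ c t := Function.isPeriodicPt_minimalPeriod σ t
  have hj : (σ ^ (k % c)) t = i := by
    rw [← hk, Equiv.Perm.coe_pow, Equiv.Perm.coe_pow]
    exact hper.iterate_mod_apply k
  rcases Nat.eq_zero_or_pos (k % c) with hj0 | hjpos
  · rw [hj0, pow_zero] at hj
    simp only [Equiv.Perm.coe_one, id_eq] at hj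
    rwa [← hj]
  · have hjc : k % c < c := Nat.mod_lt _ hc0
    have heq : (σ.symm ^ (c - k % c)) t = i := by
      apply Equiv.injective (σ ^ (c - k % c))
      have e1 : (σ ^ (c - k % c)) ((σ.symm ^ (c - k % c)) t) = t := by
        have h2 : (σ.symm ^ (c - k % c) : Equiv.Perm (Fin n)) = (σ ^ (c - k % c))⁻¹ := by
          rw [← inv_pow]; rfl
        rw [h2]
        exact Equiv.apply_symm_apply _ t
      have e2 : (σ ^ (c - k % c)) ((σ ^ (k % c)) t) = t := by
        rw [← Equiv.Perm.mul_apply, ← pow_add]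
        rw [show c - k % c + k % c = c by omega]
        exact hcycle
      rw [e1, ← hj, e2]
    rw [← heq]
    exact hfac (c - k % c) (by omega) (by omega)

section GenericAmat
variable {n : ℕ} (𝒜 : Matrix (Fin n) (Fin n) Bool) (σ : Equiv.Perm (Fin n)) (R : Set (Fin n))
  (levelFn : Fin n → ℕ) (linkA linkT : Fin n → Fin n) (wt : Fin n → ℝ)

noncomputable def Amat : Matrix (Fin n) (Fin n) ℝ := fun i j =>
  (if i = σ j then wt j else 0) +
  (if 0 < levelFn j ∧ linkA j = j ∧ i = linkT j then 1 else 0)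


lemma Amat_row (hwt : ∀ x y, σ.SameCycle x y → wt x = wt y)
    (v : Fin n → ℂ) (μ : ℂ)
    (heig : (Amat σ levelFn linkA linkT wt).map Complex.ofRealHom *ᵥ v = μ • v) (i : Fin n) :
    (wt i : ℂ) * v (σ.symm i) +
      ∑ j ∈ Finset.univ.filter (fun j => 0 < levelFn j ∧ linkA j = j ∧ i = linkT j), v j
      = μ * v i := by
  have h0 := congrFun heig i
  simp only [Matrix.mulVec, dotProduct, Matrix.map_apply, Pi.smul_apply,
    smul_eq_mul] at h0
  rw [← h0]
  have hsplit : ∀ j, (Complex.ofRealHom (Amat σ levelFn linkA linkT wt i j)) * v j =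
      (if i = σ j then (wt j : ℂ) else 0) * v j +
      (if 0 < levelFn j ∧ linkA j = j ∧ i = linkT j then v j else 0) := by
    intro j
    unfold Amat
    rw [map_add, add_mul]
    congr 1
    · by_cases h : i = σ j <;> simp [h]
    · by_cases h : 0 < levelFn j ∧ linkA j = j ∧ i = linkT j <;> simp [h]
  rw [Finset.sum_congr rfl (fun j _ => hsplit j), Finset.sum_add_distrib]
  congr 1
  · rw [Finset.sum_eq_single (σ.symm i)]
    · rw [if_pos (Equiv.apply_symm_apply σ i).symm]
      rw [hwt i (σ.symm i) (sameCycle_symm_one σ i)]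
    · intro j _ hj
      rw [if_neg, zero_mul]
      intro h
      exact hj (by rw [h, Equiv.symm_apply_apply])
    · intro h
      exact absurd (Finset.mem_univ _) h
  · rw [Finset.sum_ite, Finset.sum_const_zero, add_zero]
end GenericAmat




noncomputable section Constr

variable {n : ℕ} (𝒜 : Matrix (Fin n) (Fin n) Bool) (σ : Equiv.Perm (Fin n)) (R : Set (Fin n))

/-- States whose orbit can reach a measured state within `k` "cycle hops". -/
def GoodSet : ℕ → Set (Fin n)
  | 0 => {x | ∃ m ∈ R, σ.SameCycle x m}
  | (k+1) => GoodSet k ∪ {x | ∃ x' y, σ.SameCycle x x' ∧ digraphRel 𝒜 x' y ∧ y ∈ GoodSet k}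

lemma GoodSet_mono {k l : ℕ} (h : k ≤ l) : GoodSet 𝒜 σ R k ⊆ GoodSet 𝒜 σ R l := by
  induction l with
  | zero => simp_all
  | succ l ih =>
    rcases Nat.eq_or_lt_of_le h with rfl | h'
    · exact subset_rfl
    · exact (ih (by omega)).trans (Set.subset_union_left)

lemma GoodSet_orbit {k : ℕ} {x y : Fin n} (hxy : σ.SameCycle x y) :
    x ∈ GoodSet 𝒜 σ R k ↔ y ∈ GoodSet 𝒜 σ R k := by
  induction k with
  | zero =>
    constructor
    · rintro ⟨m, hm, hc⟩; exact ⟨m, hm, hxy.symm.trans hc⟩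
    · rintro ⟨m, hm, hc⟩; exact ⟨m, hm, hxy.trans hc⟩
  | succ k ih =>
    constructor
    · rintro (h | ⟨x', z, hc, he, hz⟩)
      · exact Or.inl (ih.mp h)
      · exact Or.inr ⟨x', z, hxy.symm.trans hc, he, hz⟩
    · rintro (h | ⟨x', z, hc, he, hz⟩)
      · exact Or.inl (ih.mpr h)
      · exact Or.inr ⟨x', z, hxy.trans hc, he, hz⟩

lemma GoodSet_all (hreach : ∀ x, ∃ m ∈ R, Relation.ReflTransGen (digraphRel 𝒜) x m) :
    ∀ x, ∃ k, x ∈ GoodSet 𝒜 σ R k := by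
  intro x
  obtain ⟨m, hm, hpath⟩ := hreach x
  induction hpath using Relation.ReflTransGen.head_induction_on with
  | refl => exact ⟨0, ⟨m, hm, Equiv.Perm.SameCycle.refl _ _⟩⟩
  | head hab _ ih =>
    obtain ⟨k, hk⟩ := ih
    exact ⟨k + 1, Or.inr ⟨_, _, Equiv.Perm.SameCycle.refl _ _, hab, hk⟩⟩

/-- Level of a state. -/
def levelFn (x : Fin n) : ℕ :=
  if h : ∃ k, x ∈ GoodSet 𝒜 σ R k then Nat.find h else 0

lemma levelFn_mem {x : Fin n} (h : ∃ k, x ∈ GoodSet 𝒜 σ R k) :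
    x ∈ GoodSet 𝒜 σ R (levelFn 𝒜 σ R x) := by
  rw [levelFn, dif_pos h]; exact Nat.find_spec h

lemma levelFn_le {x : Fin n} {k : ℕ} (h : x ∈ GoodSet 𝒜 σ R k) :
    levelFn 𝒜 σ R x ≤ k := by
  rw [levelFn, dif_pos ⟨k, h⟩]; exact Nat.find_le h

lemma levelFn_not_mem {x : Fin n} {k : ℕ} (hex : ∃ k, x ∈ GoodSet 𝒜 σ R k)
    (h : k < levelFn 𝒜 σ R x) : x ∉ GoodSet 𝒜 σ R k := by
  rw [levelFn, dif_pos hex] at h; exact Nat.find_min hex h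

lemma levelFn_orbit {x y : Fin n} (hxy : σ.SameCycle x y) :
    levelFn 𝒜 σ R x = levelFn 𝒜 σ R y := by
  have h : (∃ k, x ∈ GoodSet 𝒜 σ R k) ↔ (∃ k, y ∈ GoodSet 𝒜 σ R k) := by
    constructor
    · rintro ⟨k, hk⟩; exact ⟨k, (GoodSet_orbit 𝒜 σ R hxy).mp hk⟩
    · rintro ⟨k, hk⟩; exact ⟨k, (GoodSet_orbit 𝒜 σ R hxy).mpr hk⟩
  rw [levelFn, levelFn]
  by_cases hx : ∃ k, x ∈ GoodSet 𝒜 σ R k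
  · rw [dif_pos hx, dif_pos (h.mp hx)]
    congr 1
    ext k
    exact GoodSet_orbit 𝒜 σ R hxy
  · rw [dif_neg hx, dif_neg (fun hy => hx (h.mpr hy))]

/-- The orbit of `x` as a finset. -/
def orbF (x : Fin n) : Finset (Fin n) := Finset.univ.filter (fun y => σ.SameCycle x y)

lemma mem_orbF {x y : Fin n} : y ∈ orbF σ x ↔ σ.SameCycle x y := by
  simp [orbF]

lemma orbF_self (x : Fin n) : x ∈ orbF σ x := mem_orbF σ |>.mpr (Equiv.Perm.SameCycle.refl _ _)

lemma orbF_eq {x y : Fin n} (hxy : σ.SameCycle x y) : orbF σ x = orbF σ y := by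
  ext z
  rw [mem_orbF, mem_orbF]
  exact ⟨fun h => hxy.symm.trans h, fun h => hxy.trans h⟩

/-- Canonical orbit representative. -/
def minOrb (x : Fin n) : Fin n := (orbF σ x).min' ⟨x, orbF_self σ x⟩

lemma minOrb_sameCycle (x : Fin n) : σ.SameCycle x (minOrb σ x) := by
  have := (orbF σ x).min'_mem ⟨x, orbF_self σ x⟩
  exact (mem_orbF σ).mp this

lemma minOrb_eq {x y : Fin n} (hxy : σ.SameCycle x y) : minOrb σ x = minOrb σ y := by
  unfold minOrb
  congr 1
  exact orbF_eq σ hxy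

/-- link predicate -/
def LinkProp (x : Fin n) : Prop :=
  ∃ a t, σ.SameCycle x a ∧ 𝒜 t a = true ∧ levelFn 𝒜 σ R t < levelFn 𝒜 σ R x

/-- helper -/
def linkPair0 (z : Fin n) : Fin n × Fin n :=
  if h : LinkProp 𝒜 σ R z then (h.choose, h.choose_spec.choose) else (z, z)

/-- Chosen link edge for the orbit of `x` (meaningful only when `0 < levelFn x`). -/
def linkPair (x : Fin n) : Fin n × Fin n := linkPair0 𝒜 σ R (minOrb σ x)

def linkA (x : Fin n) : Fin n := (linkPair 𝒜 σ R x).1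
def linkT (x : Fin n) : Fin n := (linkPair 𝒜 σ R x).2

lemma linkPair_orbit {x y : Fin n} (hxy : σ.SameCycle x y) :
    linkPair 𝒜 σ R x = linkPair 𝒜 σ R y := by
  unfold linkPair
  rw [minOrb_eq σ hxy]

lemma linkProp_of_pos (hall : ∀ x, ∃ k, x ∈ GoodSet 𝒜 σ R k) {x : Fin n}
    (hx : 0 < levelFn 𝒜 σ R x) : LinkProp 𝒜 σ R x := by
  obtain ⟨k, hk⟩ : ∃ k, levelFn 𝒜 σ R x = k + 1 := ⟨levelFn 𝒜 σ R x - 1, by omega⟩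
  have hmem := levelFn_mem 𝒜 σ R (hall x)
  rw [hk] at hmem
  have hnot : x ∉ GoodSet 𝒜 σ R k := levelFn_not_mem 𝒜 σ R (hall x) (by omega)
  rcases hmem with h | ⟨x', y, hc, he, hy⟩
  · exact absurd h hnot
  · exact ⟨x', y, hc, he, by
      have := levelFn_le 𝒜 σ R hy
      omega⟩

lemma linkProp_orbit_invariant {x : Fin n} :
    LinkProp 𝒜 σ R (minOrb σ x) ↔ LinkProp 𝒜 σ R x := by
  unfold LinkProp
  constructor
  · rintro ⟨a, t, hc, he, hl⟩
    exact ⟨a, t, (minOrb_sameCycle σ x).trans hc, he, by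
      rwa [← levelFn_orbit 𝒜 σ R (minOrb_sameCycle σ x)] at hl⟩
  · rintro ⟨a, t, hc, he, hl⟩
    exact ⟨a, t, (minOrb_sameCycle σ x).symm.trans hc, he, by
      rwa [levelFn_orbit 𝒜 σ R (minOrb_sameCycle σ x)] at hl⟩

lemma linkPair_spec (hall : ∀ x, ∃ k, x ∈ GoodSet 𝒜 σ R k) {x : Fin n}
    (hx : 0 < levelFn 𝒜 σ R x) :
    σ.SameCycle x (linkA 𝒜 σ R x) ∧ 𝒜 (linkT 𝒜 σ R x) (linkA 𝒜 σ R x) = true ∧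
      levelFn 𝒜 σ R (linkT 𝒜 σ R x) < levelFn 𝒜 σ R x := by
  have hx' : 0 < levelFn 𝒜 σ R (minOrb σ x) := by
    rwa [← levelFn_orbit 𝒜 σ R (minOrb_sameCycle σ x)]
  have h : LinkProp 𝒜 σ R (minOrb σ x) := linkProp_of_pos 𝒜 σ R hall hx'
  unfold linkA linkT linkPair linkPair0
  rw [dif_pos h]
  obtain ⟨hc, he, hl⟩ := h.choose_spec.choose_spec
  refine ⟨(minOrb_sameCycle σ x).trans hc, he, ?_⟩
  rwa [levelFn_orbit 𝒜 σ R (minOrb_sameCycle σ x)]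

/-- Cycle weight: distinct positive real per orbit. -/
def wt (x : Fin n) : ℝ := 1 + (minOrb σ x : ℕ)

lemma wt_pos (x : Fin n) : 0 < wt σ x := by
  unfold wt; positivity

lemma wt_orbit {x y : Fin n} (hxy : σ.SameCycle x y) : wt σ x = wt σ y := by
  unfold wt; rw [minOrb_eq σ hxy]

lemma wt_inj {x y : Fin n} (h : wt σ x = wt σ y) : σ.SameCycle x y := by
  unfold wt at h
  have : (minOrb σ x : ℕ) = (minOrb σ y : ℕ) := by
    have := h; field_simp at this; exact_mod_cast add_left_cancel this
  have : minOrb σ x = minOrb σ y := Fin.ext this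
  exact (minOrb_sameCycle σ x).trans (this ▸ (minOrb_sameCycle σ y).symm)

end Constr

/-- The key construction: a pattern-compatible matrix all of whose complex
eigenvectors are nonzero at some state of `R`. -/
lemma construction {n : ℕ} (𝒜 : Matrix (Fin n) (Fin n) Bool) (σ : Equiv.Perm (Fin n))
    (hσ : ∀ j, 𝒜 (σ j) j = true) (R : Set (Fin n))
    (hreach : ∀ x, ∃ m ∈ R, Relation.ReflTransGen (digraphRel 𝒜) x m) :
    ∃ A : Matrix (Fin n) (Fin n) ℝ, (∀ i j, 𝒜 i j = false → A i j = 0) ∧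
      ∀ (μ : ℂ) (v : Fin n → ℂ), v ≠ 0 → (A.map Complex.ofRealHom) *ᵥ v = μ • v →
        ∃ m ∈ R, v m ≠ 0 := by
  have hall : ∀ x, ∃ k, x ∈ GoodSet 𝒜 σ R k := GoodSet_all 𝒜 σ R hreach
  set lv := levelFn 𝒜 σ R with hlv
  set lA := linkA 𝒜 σ R with hlA
  set lT := linkT 𝒜 σ R with hlT
  set w := wt σ with hwdef
  refine ⟨Amat σ lv lA lT w, ?_, ?_⟩
  · -- pattern compatibility
    intro i j h
    unfold Amat
    rw [if_neg, if_neg, add_zero]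
    · rintro ⟨hl, ha, ht⟩
      have hs := (linkPair_spec 𝒜 σ R hall (x := j) hl).2.1
      rw [← hlA, ← hlT] at hs
      rw [ha, ← ht] at hs
      rw [hs] at h
      exact absurd h (by simp)
    · rintro rfl
      rw [hσ j] at h
      exact absurd h (by simp)
  · intro μ v hv heig
    have EQ := fun i => Amat_row σ lv lA lT w
      (fun x y hxy => by rw [hwdef]; exact wt_orbit σ hxy) v μ heig i
    -- the set of states whose orbit carries the eigenvector
    set T := Finset.univ.filter (fun x => ∃ y, σ.SameCycle x y ∧ v y ≠ 0) with hT
    have hmemT : ∀ x, x ∈ T ↔ ∃ y, σ.SameCycle x y ∧ v y ≠ 0 := by intro x; simp [hT]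
    obtain ⟨x1, hx1⟩ : ∃ x, v x ≠ 0 := Function.ne_iff.mp hv
    have hTne : T.Nonempty := ⟨x1, (hmemT x1).mpr ⟨x1, Equiv.Perm.SameCycle.refl _ _, hx1⟩⟩
    obtain ⟨xs, hxsT, hxsmax⟩ := T.exists_max_image lv hTne
    -- pure cycle relations on the top orbit
    have hpure : ∀ i, σ.SameCycle xs i → (w xs : ℂ) * v (σ.symm i) = μ * v i := by
      intro i hci
      have hEQ := EQ i
      have hsum0 : ∑ j ∈ Finset.univ.filter
          (fun j => 0 < lv j ∧ lA j = j ∧ i = lT j), v j = 0 := by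
        apply Finset.sum_eq_zero
        intro j hj
        rw [Finset.mem_filter] at hj
        obtain ⟨-, hpos, -, hjt⟩ := hj
        by_contra hvj
        have hjT : j ∈ T := (hmemT j).mpr ⟨j, Equiv.Perm.SameCycle.refl _ _, hvj⟩
        have hlevel : lv i < lv j := by
          have := (linkPair_spec 𝒜 σ R hall (x := j) hpos).2.2
          rw [← hlT, ← hjt] at this
          exact this
        have hlevel2 : lv xs = lv i := by rw [hlv]; exact levelFn_orbit 𝒜 σ R hci
        have := hxsmax j hjT
        omega
      rw [hsum0, add_zero] at hEQ
      rw [show w xs = w i by rw [hwdef]; exact wt_orbit σ hci]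
      exact hEQ
    obtain ⟨ys, hcys, hvys⟩ := (hmemT xs).mp hxsT
    obtain ⟨hμ, hNZxs', habs⟩ := cycle_all_ne σ v μ (w xs) (by rw [hwdef]; exact wt_pos σ xs)
      ys hvys (fun i hci => hpure i (hcys.trans hci))
    have hNZxs : ∀ i, σ.SameCycle xs i → v i ≠ 0 := fun i hci =>
      hNZxs' i (hcys.symm.trans hci)
    -- the chain of linked orbits
    set ch : ℕ → Fin n := fun k => Nat.rec xs (fun _ p => lT p) k with hch
    have ch0 : ch 0 = xs := rfl
    have chS : ∀ k, ch (k + 1) = lT (ch k) := fun k => rfl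
    have hdec : ∀ k, 0 < lv (ch k) → lv (ch (k + 1)) < lv (ch k) := by
      intro k h
      rw [chS, hlT, hlv]
      rw [hlv] at h
      exact (linkPair_spec 𝒜 σ R hall h).2.2
    have hr0 : ∃ k, lv (ch k) = 0 := by
      by_contra hno
      push_neg at hno
      have hstep : ∀ k, lv (ch k) + k ≤ lv (ch 0) := by
        intro k
        induction k with
        | zero => omega
        | succ k ih =>
          have := hdec k (Nat.pos_of_ne_zero (hno k))
          omega
      have := hstep (lv (ch 0) + 1)
      omega
    set r := Nat.find hr0 with hrdef
    have hr : lv (ch r) = 0 := Nat.find_spec hr0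
    have hrmin : ∀ k, k < r → 0 < lv (ch k) := by
      intro k hk
      exact Nat.pos_of_ne_zero (Nat.find_min hr0 hk)
    have hmono : ∀ a b, a < b → b ≤ r → lv (ch b) < lv (ch a) := by
      intro a b
      induction b with
      | zero => omega
      | succ b ih =>
        intro hab hbr
        rcases Nat.lt_or_ge a b with h' | h'
        · have := ih h' (by omega)
          have := hdec b (hrmin b (by omega))
          omega
        · have : a = b := by omega
          subst this
          exact hdec a (hrmin a (by omega))
    have hinj : ∀ a, a ≤ r → ∀ b, b ≤ r → lv (ch a) = lv (ch b) → a = b := by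
      intro a ha b hb h
      rcases lt_trichotomy a b with h' | h' | h'
      · have := hmono a b h' hb; omega
      · exact h'
      · have := hmono b a h' ha; omega
    -- every orbit carrying the eigenvector is on the chain
    have hSchain : ∀ j, (∃ y, σ.SameCycle j y ∧ v y ≠ 0) → ∃ k, k ≤ r ∧ σ.SameCycle (ch k) j := by
      by_contra hcon
      push_neg at hcon
      obtain ⟨B0, hB0nz, hB0not⟩ := hcon
      set Bad := Finset.univ.filter
        (fun j => (∃ y, σ.SameCycle j y ∧ v y ≠ 0) ∧ ∀ k, k ≤ r → ¬ σ.SameCycle (ch k) j)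
        with hBad
      have hmemBad : ∀ x, x ∈ Bad ↔
          ((∃ y, σ.SameCycle x y ∧ v y ≠ 0) ∧ ∀ k, k ≤ r → ¬ σ.SameCycle (ch k) x) := by
        intro x; simp [hBad]
      have hBadne : Bad.Nonempty := ⟨B0, (hmemBad B0).mpr ⟨hB0nz, hB0not⟩⟩
      obtain ⟨B, hBmem, hBmax⟩ := Bad.exists_max_image lv hBadne
      obtain ⟨hBnz, hBnot⟩ := (hmemBad B).mp hBmem
      -- pure cycle relations on orbit of B
      have hpureB : ∀ i, σ.SameCycle B i → (w B : ℂ) * v (σ.symm i) = μ * v i := by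
        intro i hci
        have hEQ := EQ i
        have hsum0 : ∑ j ∈ Finset.univ.filter
            (fun j => 0 < lv j ∧ lA j = j ∧ i = lT j), v j = 0 := by
          apply Finset.sum_eq_zero
          intro j hj
          rw [Finset.mem_filter] at hj
          obtain ⟨-, hpos, hja, hjt⟩ := hj
          by_contra hvj
          have hjnz : ∃ y, σ.SameCycle j y ∧ v y ≠ 0 := ⟨j, Equiv.Perm.SameCycle.refl _ _, hvj⟩
          have hlevel : lv i < lv j := by
            have := (linkPair_spec 𝒜 σ R hall (x := j) hpos).2.2
            rw [← hlT, ← hjt] at this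
            exact this
          have hlevelBi : lv B = lv i := by rw [hlv]; exact levelFn_orbit 𝒜 σ R hci
          by_cases hjchain : ∃ k, k ≤ r ∧ σ.SameCycle (ch k) j
          · obtain ⟨k, hkr, hkj⟩ := hjchain
            have hlvk : lv (ch k) = lv j := by rw [hlv]; exact levelFn_orbit 𝒜 σ R hkj
            have hkltr : k < r := by
              rcases Nat.lt_or_ge k r with h' | h'
              · exact h'
              · exfalso
                have : k = r := by omega
                subst this
                omega
            have hlink : lT j = ch (k + 1) := by
              rw [chS, hlT]
              have := linkPair_orbit 𝒜 σ R hkj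
              unfold linkT
              rw [this]
            have : σ.SameCycle (ch (k+1)) B := by
              rw [← hlink, ← hjt]
              exact hci.symm
            exact hBnot (k+1) (by omega) this
          · push_neg at hjchain
            have hjBad : j ∈ Bad := (hmemBad j).mpr ⟨hjnz, hjchain⟩
            have := hBmax j hjBad
            omega
        rw [hsum0, add_zero] at hEQ
        rw [show w B = w i by rw [hwdef]; exact wt_orbit σ hci]
        exact hEQ
      obtain ⟨yB, hcyB, hvyB⟩ := hBnz
      obtain ⟨-, -, habsB⟩ := cycle_all_ne σ v μ (w B) (by rw [hwdef]; exact wt_pos σ B)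
        yB hvyB (fun i hci => hpureB i (hcyB.trans hci))
      have hwBxs : w B = w xs := by rw [habsB] at habs; rw [habs]
      have hsame : σ.SameCycle B xs := by
        rw [hwdef] at hwBxs
        exact wt_inj σ hwBxs
      exact hBnot 0 (by omega) hsame.symm
    -- descend along the chain
    have hchainNZ : ∀ k, k ≤ r → ∀ i, σ.SameCycle (ch k) i → v i ≠ 0 := by
      intro k
      induction k with
      | zero =>
        intro _ i hci
        exact hNZxs i hci
      | succ k ih =>
        intro hk1 i hci
        have hkr : k ≤ r := by omega
        have hkltr : k < r := by omega
        have hlvlk : 0 < lv (ch k) := hrmin k hkltr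
        have hspec := linkPair_spec 𝒜 σ R hall (x := ch k) (by rw [← hlv]; exact hlvlk)
        rw [← hlA, ← hlT] at hspec
        set t := ch (k+1) with ht
        set a := lA (ch k) with ha
        have htlink : t = lT (ch k) := chS k
        have hva : v a ≠ 0 := ih hkr a hspec.1
        -- identify the unique source into the orbit of t
        have hsrc : ∀ i', σ.SameCycle t i' → ∀ j, (0 < lv j ∧ lA j = j ∧ i' = lT j) →
            v j ≠ 0 → j = a ∧ i' = t := by
          intro i' hci' j hj hvj
          obtain ⟨hpos, hja, hjt⟩ := hj
          obtain ⟨k', hk'r, hk'j⟩ := hSchain j ⟨j, Equiv.Perm.SameCycle.refl _ _, hvj⟩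
          have hlvk' : lv (ch k') = lv j := by rw [hlv]; exact levelFn_orbit 𝒜 σ R hk'j
          have hk'ltr : k' < r := by
            rcases Nat.lt_or_ge k' r with h' | h'
            · exact h'
            · exfalso
              have : k' = r := by omega
              subst this
              omega
          have hlink : lT j = ch (k' + 1) := by
            rw [chS, hlT]
            have := linkPair_orbit 𝒜 σ R hk'j
            unfold linkT
            rw [this]
          have hi'ch : i' = ch (k' + 1) := by rw [hjt, hlink]
          have hlvi' : lv (ch (k'+1)) = lv (ch (k+1)) := by
            rw [← hi'ch]
            have h1 : lv t = lv i' := by rw [hlv]; exact levelFn_orbit 𝒜 σ R hci'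
            rw [← h1, ht]
          have hkk' : k' + 1 = k + 1 := hinj (k'+1) (by omega) (k+1) (by omega) hlvi'
          have hk'k : k' = k := by omega
          subst hk'k
          constructor
          · have hlinkA : lA j = lA (ch k') := by
              rw [hlA]
              have := linkPair_orbit 𝒜 σ R hk'j
              unfold linkA
              rw [this]
            rw [← hja, hlinkA, ← ha]
          · rw [hi'ch, ← ht]
        have hrel1 : ∀ i', σ.SameCycle t i' → i' ≠ t →
            (w t : ℂ) * v (σ.symm i') = μ * v i' := by
          intro i' hci' hne
          have hEQ := EQ i'
          have hsum0 : ∑ j ∈ Finset.univ.filter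
              (fun j => 0 < lv j ∧ lA j = j ∧ i' = lT j), v j = 0 := by
            apply Finset.sum_eq_zero
            intro j hj
            rw [Finset.mem_filter] at hj
            by_contra hvj
            exact hne (hsrc i' hci' j hj.2 hvj).2
          rw [hsum0, add_zero] at hEQ
          rw [show w t = w i' by rw [hwdef]; exact wt_orbit σ hci']
          exact hEQ
        have hrelt : (w t : ℂ) * v (σ.symm t) + v a = μ * v t := by
          have hEQ := EQ t
          have hsum : ∑ j ∈ Finset.univ.filter
              (fun j => 0 < lv j ∧ lA j = j ∧ t = lT j), v j = v a := by
            rw [Finset.sum_eq_single a]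
            · intro j hj hja
              rw [Finset.mem_filter] at hj
              by_contra hvj
              exact hja (hsrc t (Equiv.Perm.SameCycle.refl _ _) j hj.2 hvj).1
            · intro hnot
              exfalso
              apply hnot
              rw [Finset.mem_filter]
              refine ⟨Finset.mem_univ _, ?_, ?_, ?_⟩
              · have h1 : lv (ch k) = lv a := levelFn_orbit 𝒜 σ R hspec.1
                omega
              · have h2 : linkPair 𝒜 σ R (ch k) = linkPair 𝒜 σ R a :=
                  linkPair_orbit 𝒜 σ R hspec.1
                show linkA 𝒜 σ R a = a
                unfold linkA
                rw [← h2]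
                exact ha.symm
              · have h2 : linkPair 𝒜 σ R (ch k) = linkPair 𝒜 σ R a :=
                  linkPair_orbit 𝒜 σ R hspec.1
                show t = linkT 𝒜 σ R a
                unfold linkT
                rw [← h2]
                exact htlink
          rw [hsum] at hEQ
          exact hEQ
        exact cycle_impulse σ v μ (w t) (by rw [hwdef]; exact wt_pos σ t) hμ t a hva
          hrel1 hrelt i hci
    -- conclude
    have hmem0 : ch r ∈ GoodSet 𝒜 σ R 0 := by
      have := levelFn_mem 𝒜 σ R (hall (ch r))
      rw [← hlv, hr] at this
      exact this
    obtain ⟨m, hm, hcm⟩ := hmem0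
    exact ⟨m, hm, hchainNZ r le_rfl m hcm⟩

lemma sameSCC_refl {V : Type*} (E : V → V → Prop) (u : V) : SameSCC E u u :=
  ⟨Relation.ReflTransGen.refl, Relation.ReflTransGen.refl⟩

lemma sameSCC_symm {V : Type*} {E : V → V → Prop} {u v : V} (h : SameSCC E u v) :
    SameSCC E v u := ⟨h.2, h.1⟩

lemma sameSCC_trans {V : Type*} {E : V → V → Prop} {u v w : V} (h1 : SameSCC E u v)
    (h2 : SameSCC E v w) : SameSCC E u w := ⟨h1.1.trans h2.1, h2.2.trans h1.2⟩

/-- An SCC is determined by any of its members. -/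
lemma scc_eq_of_mem {V : Type*} {E : V → V → Prop} {S : Set V} (hS : IsSCC E S) {u : V}
    (hu : u ∈ S) : S = {w | SameSCC E w u} := by
  ext w
  constructor
  · intro hw
    exact hS.2.1 w hw u hu
  · intro hw
    exact hS.2.2 w u hu hw

lemma parentSCC_eq {V : Type*} {E : V → V → Prop} {S S' : Set V} (hS : IsSCC E S)
    (hS' : IsSCC E S') {u : V} (hu : u ∈ S) (hu' : u ∈ S') : S = S' := by
  rw [scc_eq_of_mem hS hu, scc_eq_of_mem hS' hu']

/-- In a finite digraph every node reaches a parent SCC. -/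
lemma reach_parent {n : ℕ} (E : Fin n → Fin n → Prop) (x : Fin n) :
    ∃ S, IsParentSCC E S ∧ ∃ y ∈ S, Relation.ReflTransGen E x y := by
  set reachF : Fin n → Finset (Fin n) :=
    fun z => Finset.univ.filter (fun w => Relation.ReflTransGen E z w) with hreachF
  have hmemr : ∀ z w, w ∈ reachF z ↔ Relation.ReflTransGen E z w := by
    intro z w; simp [hreachF]
  have hsub : ∀ z w, Relation.ReflTransGen E z w → reachF w ⊆ reachF z := by
    intro z w h u hu
    rw [hmemr] at hu ⊢
    exact h.trans hu
  set U : Finset (Fin n) := Finset.univ.filter (fun z => Relation.ReflTransGen E x z) with hU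
  have hmemU : ∀ z, z ∈ U ↔ Relation.ReflTransGen E x z := by intro z; simp [hU]
  have hUne : U.Nonempty := ⟨x, (hmemU x).mpr Relation.ReflTransGen.refl⟩
  obtain ⟨y, hyU, hymin⟩ := U.exists_min_image (fun z => (reachF z).card) hUne
  have hxy : Relation.ReflTransGen E x y := (hmemU y).mp hyU
  refine ⟨{u | SameSCC E u y}, ⟨⟨⟨y, sameSCC_refl E y⟩, ?_, ?_⟩, ?_⟩,
    y, sameSCC_refl E y, hxy⟩
  · intro u hu v hv
    exact sameSCC_trans hu (sameSCC_symm hv)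
  · intro u v hv huv
    exact sameSCC_trans huv hv
  · -- parent property
    intro u hu v huv
    have hyu : Relation.ReflTransGen E y u := hu.2
    have hyv : Relation.ReflTransGen E y v := hyu.trans (Relation.ReflTransGen.single huv)
    have hvU : v ∈ U := (hmemU v).mpr (hxy.trans hyv)
    have hsubvy : reachF v ⊆ reachF y := hsub y v hyv
    have hcard : (reachF y).card ≤ (reachF v).card := hymin v hvU
    have heq : reachF v = reachF y :=
      Finset.eq_of_subset_of_card_le hsubvy hcard
    have hyin : y ∈ reachF v := by
      rw [heq, hmemr]
    have hvy : Relation.ReflTransGen E v y := (hmemr v y).mp hyin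
    exact ⟨hvy, hyv⟩

/-- Term rank `n` yields a spanning permutation. -/
lemma perm_of_termRank {n : ℕ} (𝒜 : Matrix (Fin n) (Fin n) Bool)
    (hrank : sSup {k : ℕ | ∃ (r : Fin k → Fin n) (c : Fin k → Fin n),
      Function.Injective r ∧ Function.Injective c ∧ ∀ i, 𝒜 (r i) (c i) = true} = n) :
    ∃ σ : Equiv.Perm (Fin n), ∀ j, 𝒜 (σ j) j = true := by
  set s := {k : ℕ | ∃ (r : Fin k → Fin n) (c : Fin k → Fin n),
      Function.Injective r ∧ Function.Injective c ∧ ∀ i, 𝒜 (r i) (c i) = true} with hs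
  have h0 : (0 : ℕ) ∈ s := ⟨Fin.elim0, Fin.elim0, fun a => a.elim0, fun a => a.elim0,
    fun i => i.elim0⟩
  have hbdd : BddAbove s := by
    refine ⟨n, ?_⟩
    rintro k ⟨r, c, hr, hc, h⟩
    simpa using Fintype.card_le_of_injective r hr
  have hmem : n ∈ s := by
    rw [← hrank]
    exact Nat.sSup_mem ⟨0, h0⟩ hbdd
  obtain ⟨r, c, hr, hc, h⟩ := hmem
  have hrb : Function.Bijective r := (Finite.injective_iff_bijective).mp hr
  have hcb : Function.Bijective c := (Finite.injective_iff_bijective).mp hc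
  set er := Equiv.ofBijective r hrb
  set ec := Equiv.ofBijective c hcb
  refine ⟨ec.symm.trans er, fun j => ?_⟩
  have h1 : c (ec.symm j) = j := ec.apply_symm_apply j
  have h2 := h (ec.symm j)
  rw [h1] at h2
  exact h2


/-- If the term rank of `𝒜` equals `n`, a single-`1`-per-row output
pattern makes `(𝒜, ℋ)` structurally observable iff every parent SCC contains a
measured state; consequently the minimum number of such rows equals the number of
parent SCCs. -/
theorem stmt8 {n : ℕ} (𝒜 : Matrix (Fin n) (Fin n) Bool)
    (hrank : termRank 𝒜 = n) :
    (∀ (p : ℕ) (ℋ : Matrix (Fin p) (Fin n) Bool), (∀ i, ∃! j, ℋ i j = true) →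
      (StructurallyObservable 𝒜 ℋ ↔
        ∀ S : Set (Fin n), IsParentSCC (digraphRel 𝒜) S → ∃ u ∈ S, Measured ℋ u)) ∧
    IsLeast {p : ℕ | ∃ ℋ : Matrix (Fin p) (Fin n) Bool,
        (∀ i, ∃! j, ℋ i j = true) ∧ StructurallyObservable 𝒜 ℋ}
      (Nat.card {S : Set (Fin n) // IsParentSCC (digraphRel 𝒜) S}) := by
  classical
  -- a spanning permutation from the term-rank hypothesis
  obtain ⟨σ, hσ⟩ : ∃ σ : Equiv.Perm (Fin n), ∀ j, 𝒜 (σ j) j = true := by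
    exact perm_of_termRank 𝒜 hrank
  -- Part 1
  have part1 : ∀ (p : ℕ) (ℋ : Matrix (Fin p) (Fin n) Bool), (∀ i, ∃! j, ℋ i j = true) →
      (StructurallyObservable 𝒜 ℋ ↔
        ∀ S : Set (Fin n), IsParentSCC (digraphRel 𝒜) S → ∃ u ∈ S, Measured ℋ u) := by
    intro p ℋ hone
    constructor
    · intro hso S hS
      by_contra hcon
      push_neg at hcon
      exact necessity 𝒜 ℋ S hS hcon hso
    · intro hmeas
      have hreach : ∀ x, ∃ m ∈ {j | Measured ℋ j},
          Relation.ReflTransGen (digraphRel 𝒜) x m := by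
        intro x
        obtain ⟨S, hS, y, hy, hxy⟩ := reach_parent (digraphRel 𝒜) x
        obtain ⟨u, hu, hmu⟩ := hmeas S hS
        have hyu : Relation.ReflTransGen (digraphRel 𝒜) y u := (hS.1.2.1 u hu y hy).2
        exact ⟨u, hmu, hxy.trans hyu⟩
      obtain ⟨A, hAc, hAe⟩ := construction 𝒜 σ hσ _ hreach
      refine ⟨A, fun i j => if ℋ i j = true then (1:ℝ) else 0, hAc, ?_, ?_⟩
      · intro i j h
        simp [h]
      · apply pbh
        intro μ v hv heig
        obtain ⟨m, hm, hvm⟩ := hAe μ v hv heig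
        obtain ⟨i0, hi0⟩ := hm
        intro h0
        apply hvm
        have hrow := congrFun h0 i0
        simp only [Matrix.mulVec, dotProduct, Matrix.map_apply, Pi.zero_apply] at hrow
        rw [Finset.sum_eq_single m] at hrow
        · simp only [Matrix.map, Matrix.of_apply, hi0] at hrow
          simpa using hrow
        · intro j _ hjm
          have hj : ℋ i0 j = false := by
            obtain ⟨j0, hj0, huniq⟩ := hone i0
            have hmj0 : m = j0 := huniq m hi0
            by_contra hjj
            rw [Bool.not_eq_false] at hjj
            exact hjm (by rw [huniq j hjj, ← hmj0])
          simp only [Matrix.map, Matrix.of_apply, hj]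
          simp
        · intro hnot
          exact absurd (Finset.mem_univ m) hnot
  refine ⟨part1, ?_, ?_⟩
  · -- membership
    set P := {S : Set (Fin n) // IsParentSCC (digraphRel 𝒜) S} with hP
    haveI : Fintype P := Fintype.ofFinite _
    have hcard : Fintype.card P = Nat.card P := (Nat.card_eq_fintype_card).symm
    set e : P ≃ Fin (Nat.card P) := Fintype.equivFinOfCardEq hcard with he
    have hrep : ∀ q : P, ∃ u, u ∈ q.1 := fun q => q.2.1.1
    choose rep hrepmem using hrep
    set ℋ0 : Matrix (Fin (Nat.card P)) (Fin n) Bool :=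
      fun i j => if j = rep (e.symm i) then true else false with hH0
    have hmemH0 : ∀ i j, ℋ0 i j = true ↔ j = rep (e.symm i) := by
      intro i j
      by_cases h : j = rep (e.symm i) <;> simp [hH0, h]
    have honeH0 : ∀ i, ∃! j, ℋ0 i j = true := by
      intro i
      exact ⟨rep (e.symm i), (hmemH0 _ _).mpr rfl, fun j hj => (hmemH0 _ _).mp hj⟩
    refine ⟨ℋ0, honeH0, (part1 _ _ honeH0).mpr ?_⟩
    intro S hS
    exact ⟨rep ⟨S, hS⟩, hrepmem ⟨S, hS⟩, e ⟨S, hS⟩,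
      (hmemH0 _ _).mpr (by rw [Equiv.symm_apply_apply])⟩
  · -- lower bound
    rintro p ⟨ℋ, hone, hso⟩
    have hmeas := (part1 p ℋ hone).mp hso
    set P := {S : Set (Fin n) // IsParentSCC (digraphRel 𝒜) S} with hP
    haveI : Fintype P := Fintype.ofFinite _
    have hpick : ∀ q : P, ∃ u, u ∈ q.1 ∧ Measured ℋ u := by
      intro q
      obtain ⟨u, hu, hmu⟩ := hmeas q.1 q.2
      exact ⟨u, hu, hmu⟩
    choose u hu hmu using hpick
    have hrow : ∀ q : P, ∃ i, ℋ i (u q) = true := fun q => hmu q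
    choose row hrowspec using hrow
    have hinj : Function.Injective row := by
      intro q q' hqq
      obtain ⟨j0, hj0, huniq⟩ := hone (row q)
      have h1 : u q = j0 := huniq (u q) (hrowspec q)
      have h2 : u q' = j0 := huniq (u q') (by rw [hqq]; exact hrowspec q')
      have huu : u q = u q' := by rw [h1, h2]
      have hSeq : q.1 = q'.1 :=
        parentSCC_eq q.2.1 q'.2.1 (hu q) (huu ▸ hu q')
      exact Subtype.ext hSeq
    calc Nat.card P = Fintype.card P := Nat.card_eq_fintype_card
      _ ≤ Fintype.card (Fin p) := Fintype.card_le_of_injective row hinj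
      _ = p := Fintype.card_fin p
end

section
/- Let A ∈ ℝ^{n×n}, let there be N agents with measurement matrices H_j ∈ ℝ^{p_j×n}, and let N_α(i), N_β(i) ⊆ {1,…,N} (with i ∈ N_α(i) and i ∈ N_β(i)) be the measurement-sharing and prediction-sharing neighborhoods of agent i. Let W ∈ ℝ^{N×N} satisfy w_{ij} = 0 for j ∉ N_β(i) and Σ_{j=1}^N w_{ij} = 1 for every i. Suppose sequences of vectors satisfy x_k = A x_{k−1} + v_{k−1} and y^j_k = H_j x_k + r^j_k, and each agent i computes x̂^i_{k|k−1} = Σ_{j∈N_β(i)} w_{ij} A x̂^j_{k−1|k−1} and x̂^i_{k|k} = x̂^i_{k|k−1} + K^i_k Σ_{j∈N_α(i)} H_j^⊤ (y^j_k − H_j x̂^i_{k|k−1}) for some gain matrices K^i_k ∈ ℝ^{n×n}. Define the errors e^i_k = x_k − x̂^i_{k|k} and their stacked vector e_k = (e^1_k; …; e^N_k) ∈ ℝ^{Nn}. Then e_k = (W ⊗ A − K_k D_H (W ⊗ A)) e_{k−1} + q_k, where ⊗ denotes the Kronecker product, K_k = blockdiag(K^1_k, …, K^N_k), D_H = blockdiag(Σ_{j∈N_α(1)}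 H_j^⊤ H_j, …, Σ_{j∈N_α(N)} H_j^⊤ H_j), and q_k stacks the vectors q^i_k = (I_n − K^i_k Σ_{j∈N_α(i)} H_j^⊤ H_j) v_{k−1} − K^i_k Σ_{j∈N_α(i)} H_j^⊤ r^j_k. -/
open Matrix

/-- Block-diagonal matrix on agent-state indices built from one `n × n` block per agent. -/
noncomputable def blockDiagAgents {N n : ℕ} (K : Fin N → Matrix (Fin n) (Fin n) ℝ) :
    Matrix (Fin N × Fin n) (Fin N × Fin n) ℝ :=
  Matrix.of fun pq rs => if pq.1 = rs.1 then K pq.1 pq.2 rs.2 else 0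

lemma bd_mulVec {N n : ℕ} (F : Fin N → Matrix (Fin n) (Fin n) ℝ)
    (z : Fin N × Fin n → ℝ) (i : Fin N) (a : Fin n) :
    ((blockDiagAgents F).mulVec z) (i, a) = ((F i).mulVec (fun b => z (i, b))) a := by
  simp only [blockDiagAgents, mulVec, dotProduct, Fintype.sum_prod_type, Matrix.of_apply]
  rw [Finset.sum_comm]
  simp [Finset.sum_ite_eq', mulVec, dotProduct]

lemma kron_mulVec {N n : ℕ} (W : Matrix (Fin N) (Fin N) ℝ) (A : Matrix (Fin n) (Fin n) ℝ)
    (z : Fin N × Fin n → ℝ) (i : Fin N) (a : Fin n) :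
    ((Matrix.kroneckerMap (· * ·) W A).mulVec z) (i, a)
      = ∑ j, W i j * ((A.mulVec (fun b => z (j, b))) a) := by
  simp only [mulVec, dotProduct, Fintype.sum_prod_type, kroneckerMap_apply, Finset.mul_sum,
    mul_assoc]

lemma mulVec_sum' {m n : ℕ} (M : Matrix (Fin m) (Fin n) ℝ) {ι : Type*} (s : Finset ι)
    (f : ι → Fin n → ℝ) : M.mulVec (∑ j ∈ s, f j) = ∑ j ∈ s, M.mulVec (f j) :=
  map_sum M.mulVecLin f s

lemma sum_mulVec' {m n : ℕ} {ι : Type*} (s : Finset ι) (M : ι → Matrix (Fin m) (Fin n) ℝ)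
    (u : Fin n → ℝ) : (∑ j ∈ s, M j).mulVec u = ∑ j ∈ s, (M j).mulVec u := by
  funext a
  simp only [mulVec, dotProduct, Finset.sum_apply, Matrix.sum_apply, Finset.sum_mul]
  rw [Finset.sum_comm]

/-- The distributed inference error dynamics
`e_k = (W ⊗ A − K_k D_H (W ⊗ A)) e_{k−1} + q_k`. -/
theorem stmt9 {n N : ℕ}
    (A : Matrix (Fin n) (Fin n) ℝ) (p : Fin N → ℕ)
    (H : (j : Fin N) → Matrix (Fin (p j)) (Fin n) ℝ)
    (Nα Nβ : Fin N → Finset (Fin N))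
    (hαmem : ∀ i, i ∈ Nα i) (hβmem : ∀ i, i ∈ Nβ i)
    (W : Matrix (Fin N) (Fin N) ℝ)
    (hW0 : ∀ i j, j ∉ Nβ i → W i j = 0)
    (hW1 : ∀ i, ∑ j, W i j = 1)
    (x v : ℕ → Fin n → ℝ)
    (y r : (j : Fin N) → ℕ → Fin (p j) → ℝ)
    (hx : ∀ k, x (k + 1) = A.mulVec (x k) + v k)
    (hy : ∀ j k, y j k = (H j).mulVec (x k) + r j k)
    (K : Fin N → ℕ → Matrix (Fin n) (Fin n) ℝ)
    (xp xe : Fin N → ℕ → Fin n → ℝ)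
    (hxp : ∀ i k, xp i (k + 1) = ∑ j ∈ Nβ i, W i j • A.mulVec (xe j k))
    (hxe : ∀ i k, xe i (k + 1) = xp i (k + 1) + (K i (k + 1)).mulVec
        (∑ j ∈ Nα i, (H j)ᵀ.mulVec (y j (k + 1) - (H j).mulVec (xp i (k + 1)))))
    (e : ℕ → Fin N × Fin n → ℝ)
    (he : ∀ k i a, e k (i, a) = x k a - xe i k a)
    (q : ℕ → Fin N × Fin n → ℝ)
    (hq : ∀ k i, (fun a => q (k + 1) (i, a)) =
        (1 - K i (k + 1) * ∑ j ∈ Nα i, (H j)ᵀ * H j).mulVec (v k)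
          - (K i (k + 1)).mulVec (∑ j ∈ Nα i, (H j)ᵀ.mulVec (r j (k + 1)))) :
    ∀ k, e (k + 1) =
      (Matrix.kroneckerMap (· * ·) W A
          - blockDiagAgents (fun i => K i (k + 1))
            * blockDiagAgents (fun i => ∑ j ∈ Nα i, (H j)ᵀ * H j)
            * Matrix.kroneckerMap (· * ·) W A).mulVec (e k)
        + q (k + 1) := by
  intro k
  set z : Fin N × Fin n → ℝ := (Matrix.kroneckerMap (· * ·) W A).mulVec (e k) with hzdef
  -- the i-th block of z equals A x_k − xp_i
  have hz : ∀ i', (fun b => z (i', b)) = A.mulVec (x k) - xp i' (k + 1) := by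
    intro i'
    funext b
    rw [hzdef, kron_mulVec]
    have hxk : ∀ j, A.mulVec (fun c => e k (j, c)) = A.mulVec (x k) - A.mulVec (xe j k) := by
      intro j
      have hej : (fun c => e k (j, c)) = x k - xe j k := by funext c; exact he k j c
      rw [hej, mulVec_sub]
    simp only [hxk, Pi.sub_apply, mul_sub, Finset.sum_sub_distrib, ← Finset.sum_mul, hW1, one_mul]
    congr 1
    rw [hxp, Finset.sum_apply]
    rw [← Finset.sum_subset (Finset.subset_univ (Nβ i'))]
    · simp [smul_eq_mul]
    · intro j _ hj; simp [hW0 i' j hj]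
  funext pr
  obtain ⟨i, a⟩ := pr
  -- abbreviations
  set KK := K i (k + 1) with hKK
  set D := ∑ j ∈ Nα i, (H j)ᵀ * H j with hD
  set zi : Fin n → ℝ := fun b => z (i, b) with hzi
  -- rewrite RHS
  have hRHS : ((Matrix.kroneckerMap (· * ·) W A
          - blockDiagAgents (fun i => K i (k + 1))
            * blockDiagAgents (fun i => ∑ j ∈ Nα i, (H j)ᵀ * H j)
            * Matrix.kroneckerMap (· * ·) W A).mulVec (e k)) (i, a)
      = zi a - (KK.mulVec (D.mulVec zi)) a := by
    rw [sub_mulVec, ← mulVec_mulVec, ← mulVec_mulVec]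
    simp only [Pi.sub_apply, ← hzdef]
    congr 1
    rw [bd_mulVec]
    congr 1
    have : (fun b => ((blockDiagAgents (fun i => ∑ j ∈ Nα i, (H j)ᵀ * H j)).mulVec z) (i, b))
        = D.mulVec zi := by
      funext b; rw [bd_mulVec]
    rw [this]
  rw [Pi.add_apply, hRHS]
  -- main vector identity for block i
  have hxpz : x (k + 1) - xp i (k + 1) = zi + v k := by
    rw [hzi, hz i, hx]; abel
  have hSj : ∀ j ∈ Nα i, (H j)ᵀ.mulVec (y j (k + 1) - (H j).mulVec (xp i (k + 1)))
      = ((H j)ᵀ * H j).mulVec (zi + v k) + (H j)ᵀ.mulVec (r j (k + 1)) := by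
    intro j _
    have : y j (k + 1) - (H j).mulVec (xp i (k + 1))
        = (H j).mulVec (zi + v k) + r j (k + 1) := by
      rw [hy, ← hxpz, mulVec_sub]; abel
    rw [this, mulVec_add, mulVec_mulVec]
  have hS : (∑ j ∈ Nα i, (H j)ᵀ.mulVec (y j (k + 1) - (H j).mulVec (xp i (k + 1))))
      = D.mulVec (zi + v k) + ∑ j ∈ Nα i, (H j)ᵀ.mulVec (r j (k + 1)) := by
    rw [Finset.sum_congr rfl hSj, Finset.sum_add_distrib, hD, sum_mulVec']
  -- expand q
  have hqi : (fun b => q (k + 1) (i, b))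
      = v k - KK.mulVec (D.mulVec (v k)) - KK.mulVec (∑ j ∈ Nα i, (H j)ᵀ.mulVec (r j (k + 1))) := by
    rw [hq k i, sub_mulVec, one_mulVec, mulVec_mulVec, ← hD, ← hKK]
  have key : (fun b => e (k + 1) (i, b))
      = zi - KK.mulVec (D.mulVec zi) + (fun b => q (k + 1) (i, b)) := by
    have hL : (fun b => e (k + 1) (i, b)) = x (k + 1) - xe i (k + 1) := by
      funext b; exact he (k + 1) i b
    rw [hL, hxe, hS, hqi, ← hKK, mulVec_add, mulVec_add, mulVec_add]
    have : x (k + 1) - xp i (k + 1) = zi + v k := hxpz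
    abel_nf
    rw [show x (k + 1) = zi + v k + xp i (k + 1) by rw [← hxpz]; abel]
    abel
  have := congrFun key a
  simpa using this
end

section
/- Let N ≥ 1, n ≥ N, let S_1, …, S_N be nonempty pairwise disjoint subsets of {1, …, n}, and let c : {1,…,N} × {1,…,n} → ℝ be a cost function. Call an injective map f : {1,…,N} → {1,…,n} feasible if every set S_j contains f(i) for some agent i. Then feasible maps exist, and the minimum of Σ_{i=1}^N c(i, f(i)) over feasible maps f equals the minimum over permutations σ of {1,…,N} of Σ_{i=1}^N c̄(i, σ(i)), where c̄(i, j) = min_{l ∈ S_j} c(i, l). -/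
/-- The sensing cost optimization over `N` pairwise disjoint nonempty
parent SCCs `S 1, …, S N` (choose an injective assignment of agents to states hitting
every `S j`) has the same minimum as the linear sum assignment problem with the
reduced costs `c̄ i j = min_{l ∈ S j} c i l`; moreover feasible maps exist. -/
theorem stmt10 {N n : ℕ} (hN : 1 ≤ N) (hn : N ≤ n)
    (S : Fin N → Finset (Fin n)) (hne : ∀ j, (S j).Nonempty)
    (hdisj : ∀ j j', j ≠ j' → Disjoint (S j) (S j'))
    (c : Fin N → Fin n → ℝ) :
    (∃ f : Fin N → Fin n, Function.Injective f ∧ ∀ j, ∃ i, f i ∈ S j) ∧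
    ∃ t : ℝ,
      IsLeast {t : ℝ | ∃ f : Fin N → Fin n,
        (Function.Injective f ∧ ∀ j, ∃ i, f i ∈ S j) ∧ ∑ i, c i (f i) = t} t ∧
      IsLeast {t : ℝ | ∃ σ : Equiv.Perm (Fin N),
        ∑ i, (S (σ i)).inf' (hne (σ i)) (c i) = t} t := by
  classical
  -- choose minimizers in each set
  have hmin : ∀ (i : Fin N) (j : Fin N), ∃ l, l ∈ S j ∧ (S j).inf' (hne j) (c i) = c i l := by
    intro i j
    obtain ⟨l, hl, hv⟩ := Finset.exists_mem_eq_inf' (hne j) (c i)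
    exact ⟨l, hl, hv⟩
  choose m hm hval using hmin
  -- from a permutation, build a feasible map realizing the reduced sum
  have build : ∀ σ : Equiv.Perm (Fin N),
      ∃ f : Fin N → Fin n, (Function.Injective f ∧ ∀ j, ∃ i, f i ∈ S j) ∧
        ∑ i, c i (f i) = ∑ i, (S (σ i)).inf' (hne (σ i)) (c i) := by
    intro σ
    refine ⟨fun i => m i (σ i), ⟨?_, ?_⟩, ?_⟩
    · intro i i' h
      by_contra hne'
      have hσ : σ i ≠ σ i' := fun hc => hne' (σ.injective hc)
      have := (hdisj _ _ hσ).forall_ne_finset (hm i (σ i)) (hm i' (σ i'))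
      exact this h
    · intro j
      exact ⟨σ.symm j, by simpa using hm (σ.symm j) (σ (σ.symm j))⟩
    · exact Finset.sum_congr rfl fun i _ => (hval i (σ i)).symm
  -- every feasible value dominates some permutation value
  have dom : ∀ f : Fin N → Fin n, Function.Injective f → (∀ j, ∃ i, f i ∈ S j) →
      ∃ σ : Equiv.Perm (Fin N),
        ∑ i, (S (σ i)).inf' (hne (σ i)) (c i) ≤ ∑ i, c i (f i) := by
    intro f hinj hfeas
    choose g hg using hfeas
    have hginj : Function.Injective g := by
      intro j j' h
      by_contra hne'
      exact (hdisj _ _ hne').forall_ne_finset (hg j) (by rw [h]; exact hg j') rfl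
    have hbij : Function.Bijective g := Finite.injective_iff_bijective.mp hginj
    let σ : Equiv.Perm (Fin N) := Equiv.ofBijective g hbij
    refine ⟨σ.symm, ?_⟩
    have h1 : ∑ i, (S (σ.symm i)).inf' (hne (σ.symm i)) (c i)
        = ∑ j, (S j).inf' (hne j) (c (g j)) := by
      rw [← Equiv.sum_comp σ (fun i => (S (σ.symm i)).inf' (hne (σ.symm i)) (c i))]
      exact Finset.sum_congr rfl fun j _ => by simp [σ]
    have h2 : ∑ i, c i (f i) = ∑ j, c (g j) (f (g j)) :=
      (Equiv.sum_comp σ (fun i => c i (f i))).symm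
    rw [h1, h2]
    exact Finset.sum_le_sum fun j _ => Finset.inf'_le _ (hg j)
  -- the permutation set has a least element
  obtain ⟨σ₀, -, hσ₀⟩ := Finset.exists_min_image (Finset.univ : Finset (Equiv.Perm (Fin N)))
    (fun σ => ∑ i, (S (σ i)).inf' (hne (σ i)) (c i)) ⟨1, Finset.mem_univ 1⟩
  set t := ∑ i, (S (σ₀ i)).inf' (hne (σ₀ i)) (c i) with ht
  obtain ⟨f₀, hf₀, hf₀sum⟩ := build σ₀
  constructor
  · exact ⟨f₀, hf₀⟩
  · refine ⟨t, ⟨⟨f₀, hf₀, hf₀sum⟩, ?_⟩, ⟨⟨σ₀, rfl⟩, ?_⟩⟩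
    · rintro x ⟨f, ⟨hinj, hfeas⟩, rfl⟩
      obtain ⟨σ, hσ⟩ := dom f hinj hfeas
      exact le_trans (hσ₀ σ (Finset.mem_univ σ)) hσ
    · rintro x ⟨σ, rfl⟩
      exact hσ₀ σ (Finset.mem_univ σ)
end

section
/- There exists a family consisting of cycles of 𝒢 and of directed paths of 𝒢_sys each ending at an output node, all pairwise node-disjoint on the state nodes, whose union contains every state node, if and only if the term rank of the (n+p)×n stacked pattern [𝒜; ℋ] equals n. -/
open Matrix

section B
variable {α : Type*} {R : α → α → Prop} [DecidableEq α]

lemma next_get_compat (l : List α) (h : l.Nodup) (i : Fin l.length) :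
    l.next (l.get i) (List.get_mem _ _) =
      l.get ⟨(i.1 + 1) % l.length, Nat.mod_lt _ (i.1.zero_le.trans_lt i.2)⟩ := by
  have := List.next_getElem l h i.1 i.2
  simpa using this

lemma getLast_eq_get_compat (l : List α) (h : l ≠ []) :
    l.getLast h = l.get ⟨l.length - 1, by
      have := List.length_pos_iff.mpr h; omega⟩ := by
  simp [List.getLast_eq_getElem]

lemma chain'_iff_get_compat {l : List α} : l.Chain' R ↔
    ∀ (i : ℕ) (h : i < l.length - 1), R (l.get ⟨i, by omega⟩) (l.get ⟨i + 1, by omega⟩) := by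
  show List.IsChain R l ↔ _
  rw [List.isChain_iff_getElem]
  constructor
  · intro h i hi; exact h i (by omega)
  · intro h i hi; exact h i (by omega)

end B

section B'
variable {α : Type*} {R : α → α → Prop} [DecidableEq α]

lemma next_rel_of_ne_last {l : List α} (hnd : l.Nodup) (hch : l.Chain' R)
    {x : α} (h : x ∈ l) (hlast : l.getLast? ≠ some x) : R x (l.next x h) := by
  obtain ⟨i, rfl⟩ := List.mem_iff_get.mp h
  rw [next_get_compat l hnd i]
  have hne : l ≠ [] := List.ne_nil_of_length_pos (i.1.zero_le.trans_lt i.2)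
  have hi : (i : ℕ) + 1 < l.length := by
    rcases Nat.lt_or_ge ((i : ℕ) + 1) l.length with h' | h'
    · exact h'
    · exfalso
      apply hlast
      have hv : l.length - 1 = (i : ℕ) := by have := i.2; omega
      have hidx : l.length - 1 < l.length := by omega
      have hfe : (⟨l.length - 1, hidx⟩ : Fin l.length) = i := by
        apply Fin.ext; simpa using hv
      rw [List.getLast?_eq_getLast hne, getLast_eq_get_compat]
      exact congrArg some (congrArg l.get hfe)
  have hc := chain'_iff_get_compat.mp hch i (by omega)
  simp only [Nat.mod_eq_of_lt hi]
  exact hc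

lemma next_rel_cycle {l : List α} (hnd : l.Nodup) (hch : l.Chain' R)
    (hwrap : ∀ a ∈ l.head?, ∀ b ∈ l.getLast?, R b a)
    {x : α} (h : x ∈ l) : R x (l.next x h) := by
  by_cases hlast : l.getLast? = some x
  · obtain ⟨i, rfl⟩ := List.mem_iff_get.mp h
    rw [next_get_compat l hnd i]
    have hne : l ≠ [] := List.ne_nil_of_length_pos (i.1.zero_le.trans_lt i.2)
    have hpos : 0 < l.length := i.1.zero_le.trans_lt i.2
    have hmod : ((i : ℕ) + 1) % l.length = 0 % l.length := by
      rcases Nat.lt_or_ge ((i : ℕ) + 1) l.length with h' | h'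
      · exfalso
        have hx2 : l.getLast? = some (l.get ⟨l.length - 1, by omega⟩) := by
          rw [List.getLast?_eq_getLast hne, getLast_eq_get_compat]
        rw [hlast] at hx2
        have := List.nodup_iff_injective_get.mp hnd (Option.some_injective _ hx2.symm)
        have := Fin.val_eq_of_eq this
        simp only at this
        omega
      · have : (i : ℕ) + 1 = l.length := by have := i.2; omega
        rw [this, Nat.mod_self, Nat.zero_mod]
    simp only [hmod, Nat.zero_mod]
    apply hwrap _ _ _ hlast
    rw [List.head?_eq_head hne]
    congr 1
    exact (List.get_mk_zero hpos).symm ▸ rfl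
  · exact next_rel_of_ne_last hnd hch h hlast

lemma next_inj {l : List α} (hnd : l.Nodup) {x y : α} (hx : x ∈ l) (hy : y ∈ l)
    (h : l.next x hx = l.next y hy) : x = y := by
  obtain ⟨i, rfl⟩ := List.mem_iff_get.mp hx
  obtain ⟨j, rfl⟩ := List.mem_iff_get.mp hy
  rw [next_get_compat l hnd i, next_get_compat l hnd j] at h
  have hinj := List.nodup_iff_injective_get.mp hnd
  have hval := Fin.val_eq_of_eq (hinj h)
  simp only at hval
  have hi := i.2; have hj := j.2
  have e1 : ((i : ℕ) + 1) % l.length = (i : ℕ) + 1 ∨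
      ((i : ℕ) + 1 = l.length ∧ ((i : ℕ) + 1) % l.length = 0) := by
    rcases Nat.lt_or_ge ((i : ℕ) + 1) l.length with h' | h'
    · exact Or.inl (Nat.mod_eq_of_lt h')
    · right; constructor
      · omega
      · have : (i : ℕ) + 1 = l.length := by omega
        rw [this, Nat.mod_self]
  have e2 : ((j : ℕ) + 1) % l.length = (j : ℕ) + 1 ∨
      ((j : ℕ) + 1 = l.length ∧ ((j : ℕ) + 1) % l.length = 0) := by
    rcases Nat.lt_or_ge ((j : ℕ) + 1) l.length with h' | h'
    · exact Or.inl (Nat.mod_eq_of_lt h')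
    · right; constructor
      · omega
      · have : (j : ℕ) + 1 = l.length := by omega
        rw [this, Nat.mod_self]
  congr 1
  exact Fin.val_injective (by omega)
end B'

section TR
variable {m : Type*} [Fintype m] {n : ℕ} (A : Matrix m (Fin n) Bool)

lemma termRank_set_bdd : ∀ k ∈ {k : ℕ | ∃ (r : Fin k → m) (c : Fin k → Fin n),
    Function.Injective r ∧ Function.Injective c ∧ ∀ i, A (r i) (c i) = true}, k ≤ n := by
  rintro k ⟨r, c, hr, hc, h⟩
  simpa using Fintype.card_le_of_injective c hc

lemma termRank_zero_mem : 0 ∈ {k : ℕ | ∃ (r : Fin k → m) (c : Fin k → Fin n),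
    Function.Injective r ∧ Function.Injective c ∧ ∀ i, A (r i) (c i) = true} :=
  ⟨Fin.elim0, Fin.elim0, fun i => i.elim0, fun i => i.elim0, fun i => i.elim0⟩

lemma termRank_eq_iff :
    termRank A = n ↔ ∃ σ : Fin n → m, Function.Injective σ ∧ ∀ j, A (σ j) j = true := by
  constructor
  · intro h
    have hmem := Nat.sSup_mem ⟨0, termRank_zero_mem A⟩ ⟨n, termRank_set_bdd A⟩
    rw [termRank] at h
    rw [h] at hmem
    obtain ⟨r, c, hr, hc, hrc⟩ := hmem
    have hcb : Function.Bijective c := Finite.injective_iff_bijective.mp hc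
    let e := Equiv.ofBijective c hcb
    refine ⟨r ∘ e.symm, hr.comp e.symm.injective, fun j => ?_⟩
    have : c (e.symm j) = j := e.apply_symm_apply j
    simpa [this] using hrc (e.symm j)
  · rintro ⟨σ, hσ, h⟩
    refine le_antisymm (csSup_le ⟨0, termRank_zero_mem A⟩ (termRank_set_bdd A)) ?_
    exact le_csSup ⟨n, termRank_set_bdd A⟩ ⟨σ, id, hσ, fun _ _ h => h, fun i => h i⟩

end TR

section DSF
variable {n p : ℕ} (𝒜 : Matrix (Fin n) (Fin n) Bool) (ℋ : Matrix (Fin p) (Fin n) Bool)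

lemma dsf_to_sigma (h : DisjointSpanningFamily 𝒜 ℋ) :
    ∃ σ : Fin n → Fin n ⊕ Fin p, Function.Injective σ ∧
      ∀ j, (Matrix.fromRows 𝒜 ℋ) (σ j) j = true := by
  classical
  obtain ⟨F, hF1, hF2, hF3⟩ := h
  choose E hEF hEmem using hF3
  -- basic structure of each member
  have hnd : ∀ x, (E x).1.Nodup := by
    intro x
    rcases hF1 _ (hEF x) with ⟨_, h⟩ | ⟨y, _, h⟩ <;> exact h.2.1
  have hch : ∀ x, (E x).1.Chain' (digraphRel 𝒜) := by
    intro x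
    rcases hF1 _ (hEF x) with ⟨_, h⟩ | ⟨y, _, h⟩ <;> exact h.2.2.1
  set σ : Fin n → Fin n ⊕ Fin p := fun x =>
    if h : (E x).1.getLast? = some x ∧ ∃ y, (E x).2 = some y
    then Sum.inr h.2.choose
    else Sum.inl ((E x).1.next x (hEmem x)) with hσdef
  have hnext_mem : ∀ x, (E x).1.next x (hEmem x) ∈ (E x).1 := fun x => List.next_mem _ _ _
  have hentry : ∀ j, (Matrix.fromRows 𝒜 ℋ) (σ j) j = true := by
    intro x
    by_cases h : (E x).1.getLast? = some x ∧ ∃ y, (E x).2 = some y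
    · simp only [hσdef, dif_pos h, Matrix.fromRows_apply_inr]
      obtain ⟨hl, hy⟩ := h
      rcases hF1 _ (hEF x) with ⟨hnone, _⟩ | ⟨y, hsome, hpath⟩
      · exact absurd (hy.choose_spec.symm.trans hnone) (by simp)
      · have hcy : hy.choose = y :=
          Option.some_injective _ (hy.choose_spec.symm.trans hsome)
        rw [hcy]
        exact hpath.2.2.2 x hl
    · simp only [hσdef, dif_neg h, Matrix.fromRows_apply_inl]
      rcases hF1 _ (hEF x) with ⟨hnone, hcyc⟩ | ⟨y, hsome, hpath⟩
      · exact next_rel_cycle hcyc.2.1 hcyc.2.2.1 hcyc.2.2.2 (hEmem x)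
      · have hlast : (E x).1.getLast? ≠ some x := by
          intro hl; exact h ⟨hl, y, hsome⟩
        exact next_rel_of_ne_last hpath.2.1 hpath.2.2.1 (hEmem x) hlast
  refine ⟨σ, ?_, hentry⟩
  intro x x' hxx
  by_cases hEeq : E x = E x'
  · -- same member
    by_cases h : (E x).1.getLast? = some x ∧ ∃ y, (E x).2 = some y
    · by_cases h' : (E x').1.getLast? = some x' ∧ ∃ y, (E x').2 = some y
      · rw [← hEeq] at h'
        exact Option.some_injective _ (h.1.symm.trans h'.1)
      · rw [hσdef] at hxx; simp only [dif_pos h, dif_neg h'] at hxx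
        exact absurd hxx (by simp)
    · by_cases h' : (E x').1.getLast? = some x' ∧ ∃ y, (E x').2 = some y
      · rw [hσdef] at hxx; simp only [dif_neg h, dif_pos h'] at hxx
        exact absurd hxx (by simp)
      · rw [hσdef] at hxx; simp only [dif_neg h, dif_neg h', Sum.inl.injEq] at hxx
        have hmem' : x' ∈ (E x).1 := hEeq ▸ hEmem x'
        have : (E x).1.next x (hEmem x) = (E x).1.next x' hmem' := by
          rw [hxx]; congr 1 <;> rw [hEeq]
        exact next_inj (hnd x) (hEmem x) hmem' this
  · -- different members: lists disjoint
    have hdisj := hF2 _ (hEF x) _ (hEF x') hEeq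
    by_cases h : (E x).1.getLast? = some x ∧ ∃ y, (E x).2 = some y
    · by_cases h' : (E x').1.getLast? = some x' ∧ ∃ y, (E x').2 = some y
      · rw [hσdef] at hxx; simp only [dif_pos h, dif_pos h', Sum.inr.injEq] at hxx
        have hy := h.2.choose_spec
        have hy' := h'.2.choose_spec
        rw [← hxx] at hy'
        exact absurd hy' (hdisj.2 _ hy)
      · rw [hσdef] at hxx; simp only [dif_pos h, dif_neg h'] at hxx
        exact absurd hxx (by simp)
    · by_cases h' : (E x').1.getLast? = some x' ∧ ∃ y, (E x').2 = some y
      · rw [hσdef] at hxx; simp only [dif_neg h, dif_pos h'] at hxx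
        exact absurd hxx (by simp)
      · rw [hσdef] at hxx; simp only [dif_neg h, dif_neg h', Sum.inl.injEq] at hxx
        have h1 : (E x).1.next x (hEmem x) ∈ (E x).1 := hnext_mem x
        have h2 : (E x').1.next x' (hEmem x') ∈ (E x').1 := hnext_mem x'
        rw [← hxx] at h2
        exact absurd h2 (hdisj.1 _ h1)

end DSF
namespace Stmt15

variable {n : ℕ}

def fstep (f : Fin n → Option (Fin n)) : Option (Fin n) → Option (Fin n) :=
  fun o => o.bind f

def fiter (f : Fin n → Option (Fin n)) (k : ℕ) (x : Fin n) : Option (Fin n) :=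
  (fstep f)^[k] (some x)

variable {f : Fin n → Option (Fin n)}

lemma fiter_zero (x : Fin n) : fiter f 0 x = some x := rfl

lemma fiter_succ (k : ℕ) (x : Fin n) :
    fiter f (k + 1) x = (fiter f k x).bind f := Function.iterate_succ_apply' _ _ _

lemma fiter_succ' (k : ℕ) (x : Fin n) :
    fiter f (k + 1) x = (f x).bind (fun y => fiter f k y) := by
  rw [fiter, Function.iterate_succ_apply]
  cases h : f x with
  | none => simp [fstep, h]; induction k with
            | zero => simp [fstep, h]
            | succ k ih => rw [Function.iterate_succ_apply]; simpa [fstep, h] using ih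
  | some y => simp [fstep, h]; rfl

lemma fstep_iterate_none (k : ℕ) : (fstep f)^[k] none = none := by
  induction k with
  | zero => rfl
  | succ k ih => rw [Function.iterate_succ_apply]; simpa [fstep] using ih

lemma fiter_add (a b : ℕ) (x : Fin n) :
    fiter f (a + b) x = (fstep f)^[a] (fiter f b x) := by
  rw [fiter, fiter, Function.iterate_add_apply]

lemma fiter_shift {a k : ℕ} {x y : Fin n} (h : fiter f k x = some y) :
    fiter f (a + k) x = fiter f a y := by
  rw [fiter_add, h]; rfl

lemma fiter_none_mono {t t' : ℕ} {x : Fin n} (h : fiter f t x = none) (ht : t ≤ t') :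
    fiter f t' x = none := by
  have : fiter f (t' - t + t) x = (fstep f)^[t' - t] (fiter f t x) := fiter_add _ _ _
  rw [h, fstep_iterate_none] at this
  rwa [Nat.sub_add_cancel ht] at this

section inj
variable (hf : ∀ ⦃j j' i : Fin n⦄, f j = some i → f j' = some i → j = j')

include hf

lemma fiter_cancel {t : ℕ} {x x' v : Fin n}
    (h : fiter f t x = some v) (h' : fiter f t x' = some v) : x = x' := by
  induction t generalizing v with
  | zero =>
    rw [fiter_zero] at h h'
    exact (Option.some_injective _ h).trans (Option.some_injective _ h').symm
  | succ t ih =>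
    rw [fiter_succ] at h h'
    cases ha : fiter f t x with
    | none => rw [ha] at h; exact absurd h (by simp)
    | some a =>
      cases hb : fiter f t x' with
      | none => rw [hb] at h'; exact absurd h' (by simp)
      | some b =>
        rw [ha] at h; rw [hb] at h'
        simp only [Option.bind_some] at h h'
        have : a = b := hf h h'
        exact ih ha (this ▸ hb)

end inj

/-- cyclic state -/
def Cyc (f : Fin n → Option (Fin n)) (x : Fin n) : Prop :=
  ∃ m, 0 < m ∧ fiter f m x = some x

lemma fiter_mul_period {x : Fin n} {m : ℕ} (h : fiter f m x = some x) (q : ℕ) :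
    fiter f (q * m) x = some x := by
  induction q with
  | zero => simpa using (fiter_zero x : fiter f 0 x = some x)
  | succ q ih =>
    have : (q + 1) * m = m + q * m := by ring
    rw [this, fiter_add, ih]
    exact h

lemma Cyc.fiter_ne_none {x : Fin n} (hc : Cyc f x) (k : ℕ) : fiter f k x ≠ none := by
  obtain ⟨m, hm, hcyc⟩ := hc
  intro hnone
  have hk : k ≤ (k + 1) * m := by nlinarith
  have := fiter_none_mono hnone hk
  rw [fiter_mul_period hcyc (k + 1)] at this
  exact Option.some_ne_none _ this

/-- value along the orbit -/
def vAt (f : Fin n → Option (Fin n)) (x : Fin n) (t : ℕ) : Fin n :=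
  (fiter f t x).getD x

lemma vAt_spec {x : Fin n} {t : ℕ} (h : fiter f t x ≠ none) :
    fiter f t x = some (vAt f x t) := by
  cases hv : fiter f t x with
  | none => exact absurd hv h
  | some v => simp [vAt, hv]

lemma vAt_eq {x v : Fin n} {t : ℕ} (h : fiter f t x = some v) : vAt f x t = v := by
  simp [vAt, h]

lemma fiter_one (x : Fin n) : fiter f 1 x = f x := by
  rw [fiter_succ, fiter_zero, Option.bind_some]

section withInj
variable (hf : ∀ ⦃j j' i : Fin n⦄, f j = some i → f j' = some i → j = j')
include hf

lemma cyc_of_fiter_eq {x : Fin n} {a b : ℕ} (hab : a < b)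
    (h : fiter f a x = fiter f b x) (hb : fiter f b x ≠ none) : Cyc f x := by
  have hba : fiter f (b - a) x ≠ none := fun hn => hb (fiter_none_mono hn (by omega))
  have hw : fiter f (b - a) x = some (vAt f x (b - a)) := vAt_spec hba
  have h2 : fiter f (a + (b - a)) x = fiter f a (vAt f x (b - a)) := fiter_shift hw
  have hab' : a + (b - a) = b := by omega
  rw [hab'] at h2
  have hva : fiter f a x ≠ none := fun hn => hb (fiter_none_mono hn (by omega))
  have hva' : fiter f a x = some (vAt f x a) := vAt_spec hva
  have hcan : vAt f x (b - a) = x :=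
    fiter_cancel hf (h2.symm.trans (h.symm.trans hva')) hva'
  exact ⟨b - a, by omega, by rw [hw, hcan]⟩

lemma Cyc.orbit {x y : Fin n} {a : ℕ} (hc : Cyc f x) (h : fiter f a x = some y) :
    Cyc f y := by
  obtain ⟨m, hm, hcyc⟩ := hc
  refine ⟨m, hm, ?_⟩
  have h1 : fiter f (m + a) x = fiter f m y := fiter_shift h
  have h2 : fiter f (a + m) x = fiter f a x := fiter_shift hcyc
  rw [Nat.add_comm] at h2
  rw [← h1, h2, h]

omit hf

/-- forward orbit -/
def OrbS (f : Fin n → Option (Fin n)) (x : Fin n) : Set (Fin n) :=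
  {y | ∃ k, fiter f k x = some y}

lemma self_mem_orbS (x : Fin n) : x ∈ OrbS f x := ⟨0, rfl⟩

lemma orbS_trans {x y : Fin n} (h : y ∈ OrbS f x) : OrbS f y ⊆ OrbS f x := by
  obtain ⟨a, ha⟩ := h
  rintro z ⟨k, hk⟩
  exact ⟨k + a, (fiter_shift ha).trans hk⟩

lemma cyc_mem_orbS_symm {x y : Fin n} (hc : Cyc f x) (h : y ∈ OrbS f x) :
    x ∈ OrbS f y := by
  obtain ⟨a, ha⟩ := h
  obtain ⟨m, hm, hcyc⟩ := hc
  refine ⟨(a + 1) * m - a, ?_⟩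
  have h1 : fiter f ((a + 1) * m - a + a) x = fiter f ((a + 1) * m - a) y :=
    fiter_shift ha
  have h2 : (a + 1) * m - a + a = (a + 1) * m := by
    have : a ≤ (a + 1) * m := by nlinarith
    omega
  rw [h2, fiter_mul_period hcyc] at h1
  exact h1.symm

lemma orbS_eq_of_mem {x y : Fin n} (hc : Cyc f x) (h : y ∈ OrbS f x) :
    OrbS f y = OrbS f x :=
  le_antisymm (orbS_trans h) (orbS_trans (cyc_mem_orbS_symm hc h))

open Classical in
noncomputable def orbF (f : Fin n → Option (Fin n)) (x : Fin n) : Finset (Fin n) :=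
  Finset.univ.filter (fun y => y ∈ OrbS f x)

lemma mem_orbF {x y : Fin n} : y ∈ orbF f x ↔ y ∈ OrbS f x := by
  classical
  simp [orbF]

noncomputable def canon (f : Fin n → Option (Fin n)) (x : Fin n) : Fin n :=
  (orbF f x).min' ⟨x, mem_orbF.mpr (self_mem_orbS x)⟩

lemma canon_mem_orbS (x : Fin n) : canon f x ∈ OrbS f x :=
  mem_orbF.mp (Finset.min'_mem _ _)

lemma canon_eq_of_mem {x y : Fin n} (hc : Cyc f x) (h : y ∈ OrbS f x) :
    canon f y = canon f x := by
  have : orbF f y = orbF f x := by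
    ext z; rw [mem_orbF, mem_orbF, orbS_eq_of_mem hc h]
  simp only [canon]
  congr 1

include hf

lemma not_cyc_reaches_terminal {x : Fin n} (hx : ¬ Cyc f x) :
    ∃ k j, fiter f k x = some j ∧ f j = none := by
  by_contra hcon
  push_neg at hcon
  have hsome : ∀ k, fiter f k x ≠ none := by
    intro k
    induction k with
    | zero => simp [fiter_zero]
    | succ k ih =>
      rw [fiter_succ, vAt_spec ih, Option.bind_some]
      exact hcon k _ (vAt_spec ih)
  have hginj : Function.Injective (fun t : Fin (n + 1) => vAt f x (t : ℕ)) := by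
    intro a b hab
    have hab' : vAt f x (a : ℕ) = vAt f x (b : ℕ) := hab
    by_contra hne
    rcases Ne.lt_or_gt (fun h : a = b => hne h) with h' | h'
    · have heq : fiter f (a : ℕ) x = fiter f (b : ℕ) x := by
        rw [vAt_spec (hsome a), vAt_spec (hsome b), hab']
      exact hx (cyc_of_fiter_eq hf h' heq (hsome b))
    · have heq : fiter f (b : ℕ) x = fiter f (a : ℕ) x := by
        rw [vAt_spec (hsome a), vAt_spec (hsome b), hab']
      exact hx (cyc_of_fiter_eq hf h' heq (hsome a))
  have hcard := Fintype.card_le_of_injective _ hginj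
  simp only [Fintype.card_fin] at hcard
  omega

/-- source: no predecessor -/
def Src (f : Fin n → Option (Fin n)) (s : Fin n) : Prop := ∀ j, f j ≠ some s

lemma exists_src {x : Fin n} (hx : ¬ Cyc f x) :
    ∃ s k, fiter f k s = some x ∧ Src f s := by
  by_contra hcon
  have hstep : ∀ s k, fiter f k s = some x → ∃ j, f j = some s := by
    intro s k hk
    by_contra hj
    push_neg at hj
    exact hcon ⟨s, k, hk, hj⟩
  have hchain : ∀ k, ∃ s, fiter f k s = some x := by
    intro k
    induction k with
    | zero => exact ⟨x, rfl⟩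
    | succ k ih =>
      obtain ⟨s, hs⟩ := ih
      obtain ⟨j, hjs⟩ := hstep s k hs
      refine ⟨j, ?_⟩
      rw [fiter_succ', hjs, Option.bind_some]
      exact hs
  obtain ⟨s, hs⟩ := hchain (n + 1)
  have hsome : ∀ t, t ≤ n + 1 → fiter f t s ≠ none := by
    intro t ht hnone
    rw [fiter_none_mono hnone ht] at hs
    exact Option.some_ne_none _ hs.symm
  have hginj : Function.Injective (fun t : Fin (n + 2) => vAt f s (t : ℕ)) := by
    intro a b hab
    have hab' : vAt f s (a : ℕ) = vAt f s (b : ℕ) := hab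
    by_contra hne
    have hcs : ∀ (u v : Fin (n + 2)), (u : ℕ) < (v : ℕ) →
        vAt f s (u : ℕ) = vAt f s (v : ℕ) → False := by
      intro u v huv heq
      have hsu : fiter f (u : ℕ) s ≠ none := hsome _ (by omega)
      have hsv : fiter f (v : ℕ) s ≠ none := hsome _ (by omega)
      have heq2 : fiter f (u : ℕ) s = fiter f (v : ℕ) s := by
        rw [vAt_spec hsu, vAt_spec hsv, heq]
      have hcycs : Cyc f s := cyc_of_fiter_eq hf huv heq2 hsv
      exact hx (Cyc.orbit hf hcycs hs)
    rcases Ne.lt_or_gt (fun h : a = b => hne h) with h' | h'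
    · exact absurd (hcs a b h' hab') not_false
    · exact absurd (hcs b a h' hab'.symm) not_false
  have hcard := Fintype.card_le_of_injective _ hginj
  simp only [Fintype.card_fin] at hcard
  omega

lemma src_unique_aux {s s' j : Fin n} {k k' : ℕ} (hkk : k ≤ k')
    (hsrc : Src f s) (hsrc' : Src f s')
    (hk : fiter f k s = some j) (hk' : fiter f k' s' = some j) :
    s = s' ∧ k = k' := by
  have hsome : fiter f (k' - k) s' ≠ none := fun hn => by
    rw [fiter_none_mono hn (by omega)] at hk'
    exact Option.some_ne_none _ hk'.symm
  have hw : fiter f (k' - k) s' = some (vAt f s' (k' - k)) := vAt_spec hsome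
  have h1 : fiter f (k + (k' - k)) s' = fiter f k (vAt f s' (k' - k)) := fiter_shift hw
  have h2 : k + (k' - k) = k' := by omega
  rw [h2] at h1
  have hws : vAt f s' (k' - k) = s := fiter_cancel hf (h1.symm.trans hk') hk
  rcases Nat.eq_or_lt_of_le hkk with heq | hlt
  · subst heq
    have : vAt f s' 0 = s' := by simp [vAt, fiter_zero]
    rw [Nat.sub_self] at hws
    exact ⟨(this.symm.trans hws).symm ▸ rfl, rfl⟩
  · exfalso
    have hpos : 1 ≤ k' - k := by omega
    have hsome2 : fiter f (k' - k - 1) s' ≠ none := fun hn => hsome (fiter_none_mono hn (by omega))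
    have hfs := fiter_succ (f := f) (k' - k - 1) s'
    rw [Nat.sub_add_cancel hpos] at hfs
    rw [hfs, vAt_spec hsome2, Option.bind_some] at hw
    rw [hws] at hw
    exact hsrc _ hw

lemma src_unique {s s' j : Fin n} {k k' : ℕ}
    (hsrc : Src f s) (hsrc' : Src f s')
    (hk : fiter f k s = some j) (hk' : fiter f k' s' = some j) :
    s = s' ∧ k = k' := by
  rcases le_total k k' with h | h
  · exact src_unique_aux hf h hsrc hsrc' hk hk'
  · obtain ⟨h1, h2⟩ := src_unique_aux hf h hsrc' hsrc hk' hk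
    exact ⟨h1.symm, h2.symm⟩

omit hf

lemma terminal_unique_aux {x j j' : Fin n} {a b : ℕ} (hab : a ≤ b)
    (ha : fiter f a x = some j) (hja : f j = none)
    (hb : fiter f b x = some j') : a = b ∧ j = j' := by
  have h1 : fiter f (b - a + a) x = fiter f (b - a) j := fiter_shift ha
  rw [Nat.sub_add_cancel hab] at h1
  rcases Nat.eq_or_lt_of_le hab with heq | hlt
  · subst heq
    rw [Nat.sub_self, fiter_zero] at h1
    rw [h1] at hb
    exact ⟨rfl, Option.some_injective _ hb⟩
  · exfalso
    have h2 : fiter f 1 j = none := by rw [fiter_one, hja]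
    have h3 : fiter f (b - a) j = none := fiter_none_mono h2 (by omega)
    rw [h1, h3] at hb
    exact Option.some_ne_none _ hb.symm

lemma terminal_unique {x j j' : Fin n} {a b : ℕ}
    (ha : fiter f a x = some j) (hja : f j = none)
    (hb : fiter f b x = some j') (hjb : f j' = none) : a = b ∧ j = j' := by
  rcases le_total a b with h | h
  · exact terminal_unique_aux h ha hja hb
  · obtain ⟨h1, h2⟩ := terminal_unique_aux h hb hjb ha
    exact ⟨h1.symm, h2.symm⟩

lemma terminal_not_cyc {j : Fin n} (hja : f j = none) : ¬ Cyc f j := by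
  intro hc
  exact hc.fiter_ne_none 1 (by rw [fiter_one, hja])

end withInj

lemma get_range_map {α : Type*} (g : ℕ → α) (m : ℕ) (i : Fin (((List.range m).map g).length)) :
    ((List.range m).map g).get i = g (i : ℕ) := by
  simp

open Classical in
noncomputable def per (f : Fin n → Option (Fin n)) (x : Fin n) : ℕ :=
  if h : Cyc f x then @Nat.find _ (Classical.decPred _) h else 1

lemma per_spec {x : Fin n} (hc : Cyc f x) :
    0 < per f x ∧ fiter f (per f x) x = some x := by
  rw [per, dif_pos hc]
  exact @Nat.find_spec _ (Classical.decPred _) hc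

lemma per_min {x : Fin n} (hc : Cyc f x) {k : ℕ} (h0 : 0 < k) (hlt : k < per f x) :
    fiter f k x ≠ some x := by
  rw [per, dif_pos hc] at hlt
  intro hk
  exact @Nat.find_min _ (Classical.decPred _) hc _ hlt ⟨h0, hk⟩

noncomputable def cycList (f : Fin n → Option (Fin n)) (x : Fin n) : List (Fin n) :=
  (List.range (per f x)).map (vAt f x)

lemma cycList_length (x : Fin n) : (cycList f x).length = per f x := by simp [cycList]

lemma cycList_get {x : Fin n} (i : Fin (cycList f x).length) :
    (cycList f x).get i = vAt f x (i : ℕ) :=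
  get_range_map _ _ i

lemma cycList_ne_nil {x : Fin n} (hc : Cyc f x) : cycList f x ≠ [] := by
  have := (per_spec hc).1
  intro h
  have := congrArg List.length h
  rw [cycList_length] at this
  simp at this
  omega

lemma cyc_step {x : Fin n} (hc : Cyc f x) (t : ℕ) :
    f (vAt f x t) = some (vAt f x (t + 1)) := by
  have h1 : fiter f (t + 1) x = (fiter f t x).bind f := fiter_succ t x
  rw [vAt_spec (hc.fiter_ne_none t), Option.bind_some] at h1
  rw [← h1]
  exact vAt_spec (hc.fiter_ne_none (t + 1))

lemma mem_cycList {x z : Fin n} (hc : Cyc f x) :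
    z ∈ cycList f x ↔ z ∈ OrbS f x := by
  constructor
  · intro hz
    simp only [cycList, List.mem_map, List.mem_range] at hz
    obtain ⟨t, _, rfl⟩ := hz
    exact ⟨t, vAt_spec (hc.fiter_ne_none t)⟩
  · rintro ⟨k, hk⟩
    simp only [cycList, List.mem_map, List.mem_range]
    have hper := per_spec hc
    refine ⟨k % per f x, Nat.mod_lt _ hper.1, ?_⟩
    have hdiv : k % per f x + k / per f x * per f x = k := Nat.mod_add_div' k (per f x)
    have h2 : fiter f (k % per f x + k / per f x * per f x) x
        = fiter f (k % per f x) x := fiter_shift (fiter_mul_period hper.2 _)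
    rw [hdiv, hk] at h2
    exact vAt_eq h2.symm

lemma cycList_nodup {x : Fin n} (hc : Cyc f x) : (cycList f x).Nodup := by
  apply List.Nodup.map_on _ List.nodup_range
  have key : ∀ a b : ℕ, a < b → b < per f x → vAt f x a = vAt f x b → False := by
    intro a b hab hbp heq
    have h1 : fiter f a x = fiter f b x := by
      rw [vAt_spec (hc.fiter_ne_none a), vAt_spec (hc.fiter_ne_none b), heq]
    have h2 : fiter f (per f x - b + a) x = (fstep f)^[per f x - b] (fiter f a x) :=
      fiter_add _ _ _
    rw [h1, ← fiter_add] at h2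
    have h3 : per f x - b + b = per f x := by omega
    rw [h3, (per_spec hc).2] at h2
    have hd1 : 0 < per f x - b + a := by omega
    have hd2 : per f x - b + a < per f x := by omega
    exact per_min hc hd1 hd2 h2
  intro a ha b hb heq
  rw [List.mem_range] at ha hb
  rcases lt_trichotomy a b with h | h | h
  · exact absurd (key a b h hb heq) not_false
  · exact h
  · exact absurd (key b a h ha heq.symm) not_false

lemma cycList_chain' {x : Fin n} (hc : Cyc f x) {R : Fin n → Fin n → Prop}
    (hR : ∀ a b, f a = some b → R a b) : (cycList f x).Chain' R := by
  rw [chain'_iff_get_compat]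
  intro i hi
  rw [cycList_get, cycList_get]
  exact hR _ _ (cyc_step hc i)

lemma cycList_head? {x : Fin n} (hc : Cyc f x) : (cycList f x).head? = some x := by
  have hne := cycList_ne_nil hc
  rw [List.head?_eq_head hne]
  have h0 : 0 < (cycList f x).length := List.length_pos_iff.mpr hne
  have : (cycList f x).get ⟨0, h0⟩ = (cycList f x).head hne := List.get_mk_zero h0
  rw [← this, cycList_get]
  exact congrArg some (vAt_eq (fiter_zero x))

lemma cycList_getLast? {x : Fin n} (hc : Cyc f x) :
    (cycList f x).getLast? = some (vAt f x (per f x - 1)) := by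
  have hne := cycList_ne_nil hc
  rw [List.getLast?_eq_getLast hne, getLast_eq_get_compat]
  congr 1
  rw [cycList_get]
  have h2 : ((cycList f x).length - 1 : ℕ) = per f x - 1 := by rw [cycList_length]
  exact congrArg (vAt f x) h2

lemma cycList_wrap {x : Fin n} (hc : Cyc f x) :
    f (vAt f x (per f x - 1)) = some x := by
  have h := cyc_step hc (per f x - 1)
  have hpos := (per_spec hc).1
  have : per f x - 1 + 1 = per f x := by omega
  rw [this] at h
  rw [h, vAt_eq (per_spec hc).2]

open Classical in
noncomputable def srcOf (f : Fin n → Option (Fin n)) (j : Fin n) : Fin n × ℕ :=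
  if h : ∃ s k, fiter f k s = some j ∧ Src f s
  then (h.choose, h.choose_spec.choose) else (j, 0)

section path
variable (hf : ∀ ⦃j j' i : Fin n⦄, f j = some i → f j' = some i → j = j')
include hf

lemma srcOf_spec {j : Fin n} (hj : ¬ Cyc f j) :
    fiter f (srcOf f j).2 (srcOf f j).1 = some j ∧ Src f (srcOf f j).1 := by
  have h : ∃ s k, fiter f k s = some j ∧ Src f s := exists_src hf hj
  rw [srcOf, dif_pos h]
  exact h.choose_spec.choose_spec

end path

noncomputable def pathList (f : Fin n → Option (Fin n)) (j : Fin n) : List (Fin n) :=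
  (List.range ((srcOf f j).2 + 1)).map (vAt f (srcOf f j).1)

lemma pathList_get {j : Fin n} (i : Fin (pathList f j).length) :
    (pathList f j).get i = vAt f (srcOf f j).1 (i : ℕ) :=
  get_range_map _ _ i

lemma pathList_length (j : Fin n) : (pathList f j).length = (srcOf f j).2 + 1 := by
  simp [pathList]

lemma pathList_ne_nil (j : Fin n) : pathList f j ≠ [] := by
  intro h
  have := congrArg List.length h
  rw [pathList_length] at this
  simp at this

section path2
variable (hf : ∀ ⦃j j' i : Fin n⦄, f j = some i → f j' = some i → j = j') {j : Fin n}
  (hterm : f j = none)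
include hf hterm

lemma path_some : ∀ t ≤ (srcOf f j).2, fiter f t (srcOf f j).1 ≠ none := by
  intro t ht hnone
  have hspec := (srcOf_spec hf (terminal_not_cyc hterm)).1
  rw [fiter_none_mono hnone ht] at hspec
  exact Option.some_ne_none _ hspec.symm

lemma mem_pathList {x : Fin n} :
    x ∈ pathList f j ↔ ∃ t ≤ (srcOf f j).2, vAt f (srcOf f j).1 t = x := by
  simp only [pathList, List.mem_map, List.mem_range]
  constructor
  · rintro ⟨t, ht, rfl⟩; exact ⟨t, by omega, rfl⟩
  · rintro ⟨t, ht, rfl⟩; exact ⟨t, by omega, rfl⟩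

lemma pathList_reach {x : Fin n} (hx : x ∈ pathList f j) :
    ∃ d, fiter f d x = some j := by
  rw [mem_pathList hf hterm] at hx
  obtain ⟨t, ht, rfl⟩ := hx
  have hspec := (srcOf_spec hf (terminal_not_cyc hterm)).1
  refine ⟨(srcOf f j).2 - t, ?_⟩
  have h1 : fiter f ((srcOf f j).2 - t + t) (srcOf f j).1
      = fiter f ((srcOf f j).2 - t) (vAt f (srcOf f j).1 t) :=
    fiter_shift (vAt_spec (path_some hf hterm t ht))
  have h2 : (srcOf f j).2 - t + t = (srcOf f j).2 := by omega
  rw [h2, hspec] at h1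
  exact h1.symm

lemma pathList_not_cyc {x : Fin n} (hx : x ∈ pathList f j) : ¬ Cyc f x := by
  intro hc
  obtain ⟨d, hd⟩ := pathList_reach hf hterm hx
  exact terminal_not_cyc hterm (Cyc.orbit hf hc hd)

lemma pathList_nodup : (pathList f j).Nodup := by
  apply List.Nodup.map_on _ List.nodup_range
  have key : ∀ a b : ℕ, a < b → b < (srcOf f j).2 + 1 →
      vAt f (srcOf f j).1 a = vAt f (srcOf f j).1 b → False := by
    intro a b hab hbp heq
    have hsb : fiter f b (srcOf f j).1 ≠ none := path_some hf hterm b (by omega)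
    have hsa : fiter f a (srcOf f j).1 ≠ none := path_some hf hterm a (by omega)
    have h1 : fiter f a (srcOf f j).1 = fiter f b (srcOf f j).1 := by
      rw [vAt_spec hsa, vAt_spec hsb, heq]
    have hcyc : Cyc f (srcOf f j).1 := cyc_of_fiter_eq hf hab h1 hsb
    exact terminal_not_cyc hterm
      (Cyc.orbit hf hcyc (srcOf_spec hf (terminal_not_cyc hterm)).1)
  intro a ha b hb heq
  rw [List.mem_range] at ha hb
  rcases lt_trichotomy a b with h | h | h
  · exact absurd (key a b h hb heq) not_false
  · exact h
  · exact absurd (key b a h ha heq.symm) not_false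

lemma path_step {t : ℕ} (ht : t < (srcOf f j).2) :
    f (vAt f (srcOf f j).1 t) = some (vAt f (srcOf f j).1 (t + 1)) := by
  have h1 : fiter f (t + 1) (srcOf f j).1 = (fiter f t (srcOf f j).1).bind f :=
    fiter_succ t _
  rw [vAt_spec (path_some hf hterm t (by omega)), Option.bind_some] at h1
  rw [← h1]
  exact vAt_spec (path_some hf hterm (t + 1) (by omega))

lemma pathList_chain' {R : Fin n → Fin n → Prop}
    (hR : ∀ a b, f a = some b → R a b) : (pathList f j).Chain' R := by
  rw [chain'_iff_get_compat]
  intro i hi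
  rw [pathList_get, pathList_get]
  rw [pathList_length] at hi
  have hi' : i < (srcOf f j).2 := by omega
  exact hR _ _ (path_step hf hterm hi')

lemma pathList_getLast? : (pathList f j).getLast? = some j := by
  have hne : pathList f j ≠ [] := pathList_ne_nil j
  rw [List.getLast?_eq_getLast hne, getLast_eq_get_compat]
  congr 1
  rw [pathList_get]
  have h1 : (((pathList f j).length - 1 : ℕ)) = (srcOf f j).2 := by
    simp [pathList_length]
  exact (congrArg (vAt f (srcOf f j).1) h1).trans
    (vAt_eq (srcOf_spec hf (terminal_not_cyc hterm)).1)

lemma pathList_mem_self : j ∈ pathList f j := by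
  rw [mem_pathList hf hterm]
  exact ⟨(srcOf f j).2, le_refl _, vAt_eq (srcOf_spec hf (terminal_not_cyc hterm)).1⟩

end path2

lemma pathList_cover (hf : ∀ ⦃j j' i : Fin n⦄, f j = some i → f j' = some i → j = j')
    {x : Fin n} (hx : ¬ Cyc f x) : ∃ j, f j = none ∧ x ∈ pathList f j := by
  obtain ⟨k, j, hk, hterm⟩ := not_cyc_reaches_terminal hf hx
  obtain ⟨s', a, ha, hsrc'⟩ := exists_src hf hx
  refine ⟨j, hterm, ?_⟩
  have hspec := srcOf_spec hf (terminal_not_cyc hterm)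
  have h1 : fiter f (k + a) s' = some j := (fiter_shift ha).trans hk
  obtain ⟨hss, hkk⟩ := src_unique hf hsrc' hspec.2 h1 hspec.1
  rw [mem_pathList hf hterm]
  refine ⟨a, by omega, ?_⟩
  rw [← hss]
  exact vAt_eq ha

lemma pathList_disjoint (hf : ∀ ⦃j j' i : Fin n⦄, f j = some i → f j' = some i → j = j')
    {j j' x : Fin n} (hterm : f j = none) (hterm' : f j' = none)
    (hne : j ≠ j') (hx : x ∈ pathList f j) (hx' : x ∈ pathList f j') : False := by
  obtain ⟨d, hd⟩ := pathList_reach hf hterm hx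
  obtain ⟨d', hd'⟩ := pathList_reach hf hterm' hx'
  exact hne (terminal_unique hd hterm hd' hterm').2


end Stmt15

namespace Stmt15

section assemble
variable {n p : ℕ} (𝒜 : Matrix (Fin n) (Fin n) Bool) (ℋ : Matrix (Fin p) (Fin n) Bool)

lemma sigma_to_dsf (σ : Fin n → Fin n ⊕ Fin p) (hinj : Function.Injective σ)
    (hent : ∀ j, (Matrix.fromRows 𝒜 ℋ) (σ j) j = true) :
    DisjointSpanningFamily 𝒜 ℋ := by
  classical
  set f : Fin n → Option (Fin n) := fun j => (σ j).getLeft? with hfdef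
  have hf : ∀ ⦃j j' i : Fin n⦄, f j = some i → f j' = some i → j = j' := by
    intro j j' i hj hj'
    rw [hfdef] at hj hj'
    simp only [Sum.getLeft?_eq_some_iff] at hj hj'
    exact hinj (hj.trans hj'.symm)
  have hfsome : ∀ {j i : Fin n}, f j = some i ↔ σ j = Sum.inl i := by
    intro j i; simp [hfdef]
  have hfnone : ∀ {j : Fin n}, f j = none ↔ ∃ y, σ j = Sum.inr y := by
    intro j
    rw [hfdef]
    simp only [Sum.getLeft?_eq_none_iff, Sum.isRight_iff]
  have hR : ∀ a b : Fin n, f a = some b → digraphRel 𝒜 a b := by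
    intro a b hab
    have : σ a = Sum.inl b := hfsome.mp hab
    have he := hent a
    rw [this, Matrix.fromRows_apply_inl] at he
    exact he
  -- the family
  set Fc : Finset (List (Fin n) × Option (Fin p)) :=
    (Finset.univ.filter (fun x => Cyc f x)).image
      (fun x => (cycList f (canon f x), (none : Option (Fin p)))) with hFc
  set Fp : Finset (List (Fin n) × Option (Fin p)) :=
    Finset.univ.biUnion (fun j : Fin n =>
      if h : ∃ y, σ j = Sum.inr y then {(pathList f j, some h.choose)} else ∅) with hFp
  refine ⟨Fc ∪ Fp, ?_, ?_, ?_⟩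
  · -- each member is a cycle or a path
    intro e he
    rcases Finset.mem_union.mp he with hec | hep
    · left
      rw [hFc, Finset.mem_image] at hec
      obtain ⟨x, hx, rfl⟩ := hec
      rw [Finset.mem_filter] at hx
      have hc : Cyc f x := hx.2
      obtain ⟨a, ha⟩ := canon_mem_orbS (f := f) x
      have hcc : Cyc f (canon f x) := Cyc.orbit hf hc ha
      refine ⟨rfl, cycList_ne_nil hcc, cycList_nodup hcc, cycList_chain' hcc hR, ?_⟩
      intro a' ha' b hb
      rw [cycList_head? hcc] at ha'
      rw [cycList_getLast? hcc] at hb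
      rw [Option.mem_some_iff] at ha' hb
      subst ha'; subst hb
      exact hR _ _ (cycList_wrap hcc)
    · right
      rw [hFp, Finset.mem_biUnion] at hep
      obtain ⟨j, _, hj⟩ := hep
      by_cases h : ∃ y, σ j = Sum.inr y
      · rw [dif_pos h, Finset.mem_singleton] at hj
        subst hj
        have hterm : f j = none := hfnone.mpr h
        refine ⟨h.choose, rfl, pathList_ne_nil j, pathList_nodup hf hterm,
          pathList_chain' hf hterm hR, ?_⟩
        intro b hb
        rw [pathList_getLast? hf hterm, Option.mem_some_iff] at hb
        have he := hent j
        rw [h.choose_spec, Matrix.fromRows_apply_inr] at he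
        rw [← hb]
        exact he
      · rw [dif_neg h] at hj
        exact absurd hj (Finset.notMem_empty _)
  · -- pairwise disjointness
    -- helper facts
    have hcyc_mem : ∀ {x z : Fin n}, Cyc f x → z ∈ cycList f (canon f x) →
        z ∈ OrbS f x := by
      intro x z hc hz
      obtain ⟨a, ha⟩ := canon_mem_orbS (f := f) x
      have hcc : Cyc f (canon f x) := Cyc.orbit hf hc ha
      have h1 : z ∈ OrbS f (canon f x) := (mem_cycList hcc).mp hz
      exact orbS_trans ⟨a, ha⟩ h1
    have hcyc_cyc : ∀ {x z : Fin n}, Cyc f x → z ∈ cycList f (canon f x) → Cyc f z := by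
      intro x z hc hz
      obtain ⟨k, hk⟩ := hcyc_mem hc hz
      exact Cyc.orbit hf hc hk
    have hpath_term : ∀ {e : List (Fin n) × Option (Fin p)}, e ∈ Fp →
        ∃ j, f j = none ∧ e.1 = pathList f j ∧
          ∃ y, σ j = Sum.inr y ∧ e.2 = some y := by
      intro e hep
      rw [hFp, Finset.mem_biUnion] at hep
      obtain ⟨j, _, hj⟩ := hep
      by_cases h : ∃ y, σ j = Sum.inr y
      · rw [dif_pos h, Finset.mem_singleton] at hj
        subst hj
        exact ⟨j, hfnone.mpr h, rfl, h.choose, h.choose_spec, rfl⟩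
      · rw [dif_neg h] at hj
        exact absurd hj (Finset.notMem_empty _)
    intro e he e' he' hne
    rcases Finset.mem_union.mp he with hec | hep <;>
      rcases Finset.mem_union.mp he' with hec' | hep'
    · -- cycle vs cycle
      rw [hFc, Finset.mem_image] at hec hec'
      obtain ⟨x, hx, rfl⟩ := hec
      obtain ⟨x', hx', rfl⟩ := hec'
      rw [Finset.mem_filter] at hx hx'
      constructor
      · intro z hz hz'
        have h1 : z ∈ OrbS f x := hcyc_mem hx.2 hz
        have h2 : z ∈ OrbS f x' := hcyc_mem hx'.2 hz'
        have e1 : canon f z = canon f x := canon_eq_of_mem hx.2 h1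
        have e2 : canon f z = canon f x' := canon_eq_of_mem hx'.2 h2
        have hcc : canon f x = canon f x' := e1.symm.trans e2
        exact hne (by rw [hcc])
      · intro y hy
        simp at hy
    · -- cycle vs path
      rw [hFc, Finset.mem_image] at hec
      obtain ⟨x, hx, rfl⟩ := hec
      rw [Finset.mem_filter] at hx
      obtain ⟨j, hterm, hlist, y, hσj, hsnd⟩ := hpath_term hep'
      constructor
      · intro z hz hz'
        rw [hlist] at hz'
        exact pathList_not_cyc hf hterm hz' (hcyc_cyc hx.2 hz)
      · intro y₀ hy₀
        simp at hy₀
    · -- path vs cycle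
      rw [hFc, Finset.mem_image] at hec'
      obtain ⟨x, hx, rfl⟩ := hec'
      rw [Finset.mem_filter] at hx
      obtain ⟨j, hterm, hlist, y, hσj, hsnd⟩ := hpath_term hep
      constructor
      · intro z hz hz'
        rw [hlist] at hz
        exact pathList_not_cyc hf hterm hz (hcyc_cyc hx.2 hz')
      · intro y₀ hy₀
        simp only
        intro hcontra
        exact Option.some_ne_none _ hcontra.symm
    · -- path vs path
      obtain ⟨j, hterm, hlist, y, hσj, hsnd⟩ := hpath_term hep
      obtain ⟨j', hterm', hlist', y', hσj', hsnd'⟩ := hpath_term hep'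
      have hjj : j ≠ j' := by
        intro hjeq
        subst hjeq
        apply hne
        have hy : y = y' := by
          rw [hσj] at hσj'
          exact Sum.inr_injective hσj'
        have : e.2 = e'.2 := by rw [hsnd, hsnd', hy]
        have hl : e.1 = e'.1 := by rw [hlist, hlist']
        exact Prod.ext hl this
      constructor
      · intro z hz hz'
        rw [hlist] at hz
        rw [hlist'] at hz'
        exact absurd (pathList_disjoint hf hterm hterm' hjj hz hz') not_false
      · intro y₀ hy₀ hy₀'
        rw [hsnd] at hy₀
        rw [hsnd'] at hy₀'
        have h1 : y = y₀ := Option.some_injective _ hy₀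
        have h2 : y' = y₀ := Option.some_injective _ hy₀'
        apply hjj
        apply hinj
        rw [hσj, hσj', h1, h2]
  · -- coverage
    intro x
    by_cases hc : Cyc f x
    · refine ⟨(cycList f (canon f x), none), ?_, ?_⟩
      · apply Finset.mem_union_left
        rw [hFc, Finset.mem_image]
        exact ⟨x, Finset.mem_filter.mpr ⟨Finset.mem_univ _, hc⟩, rfl⟩
      · obtain ⟨a, ha⟩ := canon_mem_orbS (f := f) x
        have hcc : Cyc f (canon f x) := Cyc.orbit hf hc ha
        rw [mem_cycList hcc]
        exact cyc_mem_orbS_symm hc ⟨a, ha⟩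
    · obtain ⟨j, hterm, hmem⟩ := pathList_cover hf hc
      have h : ∃ y, σ j = Sum.inr y := hfnone.mp hterm
      refine ⟨(pathList f j, some h.choose), ?_, hmem⟩
      apply Finset.mem_union_right
      rw [hFp, Finset.mem_biUnion]
      refine ⟨j, Finset.mem_univ _, ?_⟩
      rw [dif_pos h, Finset.mem_singleton]

end assemble
end Stmt15

/-- A family of node-disjoint cycles and output-terminated paths
spanning all state nodes exists iff the term rank of the stacked pattern `[𝒜; ℋ]`
equals `n`. -/
theorem stmt15 {n p : ℕ} (𝒜 : Matrix (Fin n) (Fin n) Bool)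
    (ℋ : Matrix (Fin p) (Fin n) Bool) :
    DisjointSpanningFamily 𝒜 ℋ ↔ termRank (Matrix.fromRows 𝒜 ℋ) = n := by
  rw [termRank_eq_iff]
  constructor
  · intro h
    exact dsf_to_sigma 𝒜 ℋ h
  · rintro ⟨σ, hσ, hent⟩
    exact Stmt15.sigma_to_dsf 𝒜 ℋ σ hσ hent
end

section
/- Fix a maximum matching ℳ of the bipartite graph Γ of 𝒜, let v_1, …, v_l be its unmatched left nodes with associated contractions C_1, …, C_l, and assume C_1, …, C_l are pairwise disjoint. If ℋ ∈ {0,1}^{l×n} is a pattern with exactly one entry equal to 1 in each row, the 1 of row r lying in a column belonging to C_r, then the term rank of the (n+l)×n stacked pattern [𝒜; ℋ] equals n. -/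
open Matrix

section auxlem
variable {α : Type*} {R : α → α → Prop}

lemma chain_reaches {x : α} : ∀ {l : List α} {a : α}, List.Chain R a l → x ∈ a :: l →
    Relation.ReflTransGen R a x := by
  intro l
  induction l with
  | nil =>
    intro a _ hx
    rcases List.mem_singleton.mp hx with rfl
    exact Relation.ReflTransGen.refl
  | cons c lt ih =>
    intro a hc hx
    rcases List.chain_cons.mp hc with ⟨hac, hct⟩
    rcases List.mem_cons.mp hx with rfl | hx
    · exact Relation.ReflTransGen.refl
    · exact Relation.ReflTransGen.head hac (ih hct hx)

lemma chain_dedup : ∀ (N : ℕ) (a : α) (l : List α), l.length ≤ N → List.Chain R a l →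
    ∃ l', List.Chain R a l' ∧
      (a :: l').getLast? = (a :: l).getLast? ∧
      (a :: l').Nodup ∧ l' ⊆ l := by
  intro N
  induction N with
  | zero =>
    intro a l hl _
    have : l = [] := List.length_eq_zero_iff.mp (Nat.le_zero.mp hl)
    subst this
    exact ⟨[], List.Chain.nil, rfl, List.nodup_singleton a, List.Subset.refl _⟩
  | succ N ih =>
    intro a l hl hc
    by_cases hmem : a ∈ l
    · obtain ⟨l₁, l₂, rfl⟩ := List.append_of_mem hmem
      have hc₂ : List.Chain R a l₂ := (List.isChain_cons_split.mp hc).2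
      have hlen : l₂.length ≤ N := by
        have := hl; simp [List.length_append] at this; omega
      obtain ⟨l', h1, h2, h3, h4⟩ := ih a l₂ hlen hc₂
      refine ⟨l', h1, ?_, h3, fun x hx => List.mem_append.mpr (Or.inr (List.mem_cons_of_mem _ (h4 hx)))⟩
      rw [h2]
      have heq : a :: (l₁ ++ a :: l₂) = (a :: l₁) ++ (a :: l₂) := by simp
      rw [heq, List.getLast?_append_of_ne_nil _ (List.cons_ne_nil _ _)]
    · cases l with
      | nil => exact ⟨[], List.Chain.nil, rfl, List.nodup_singleton a, List.Subset.refl _⟩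
      | cons c lt =>
        rcases List.chain_cons.mp hc with ⟨hac, hct⟩
        have hlen : lt.length ≤ N := by simp at hl; omega
        obtain ⟨l', h1, h2, h3, h4⟩ := ih c lt hlen hct
        have hanotc : a ∉ c :: l' := by
          intro hxa
          rcases List.mem_cons.mp hxa with rfl | hxa
          · exact hmem (List.mem_cons_self)
          · exact hmem (List.mem_cons_of_mem _ (h4 hxa))
        refine ⟨c :: l', List.chain_cons.mpr ⟨hac, h1⟩, ?_, ?_, ?_⟩
        · rw [List.getLast?_cons_cons, List.getLast?_cons_cons]
          exact h2
        · exact List.nodup_cons.mpr ⟨hanotc, h3⟩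
        · intro x hx
          rcases List.mem_cons.mp hx with rfl | hx
          · exact List.mem_cons_self
          · exact List.mem_cons_of_mem _ (h4 hx)

lemma exists_nodup_chain' {a b : α} (h : Relation.ReflTransGen R a b) :
    ∃ t : List α, List.Chain R a t ∧
      (a :: t).getLast? = some b ∧ (a :: t).Nodup := by
  obtain ⟨l, hc, hlast⟩ := List.exists_isChain_cons_of_relationReflTransGen h
  obtain ⟨l', h1, h2, h3, _⟩ := chain_dedup l.length a l le_rfl hc
  refine ⟨l', h1, ?_, h3⟩
  rw [h2, List.getLast?_eq_getLast (List.cons_ne_nil _ _), hlast]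

end auxlem

/-- If the contractions `C r = contractionOf 𝒜 M (v r)` of the
unmatched left nodes `v 1, …, v l` are pairwise disjoint and `ℋ` has exactly one `1`
per row, the `1` of row `r` lying in a column of the `r`-th contraction, then the
stacked pattern `[𝒜; ℋ]` has full term rank `n`. -/
theorem stmt16 {n l : ℕ} (𝒜 : Matrix (Fin n) (Fin n) Bool)
    (M : Finset (Fin n × Fin n)) (hM : IsMaxMatching 𝒜 M)
    (v : Fin l → Fin n) (hvinj : Function.Injective v)
    (hvunm : ∀ r, UnmatchedLeft M (v r))
    (hvall : ∀ u, UnmatchedLeft M u → ∃ r, v r = u)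
    (hdisj : ∀ r r', r ≠ r' →
      Disjoint (contractionOf 𝒜 M (v r)) (contractionOf 𝒜 M (v r')))
    (ℋ : Matrix (Fin l) (Fin n) Bool)
    (hrow : ∀ r, ∃! j, ℋ r j = true)
    (hcol : ∀ r j, ℋ r j = true → j ∈ contractionOf 𝒜 M (v r)) :
    termRank (Matrix.fromRows 𝒜 ℋ) = n := by
  classical
  choose jr hjr hju using hrow
  have hreach : ∀ r, Relation.ReflTransGen (AltStep 𝒜 M) (v r) (jr r) :=
    fun r => hcol r (jr r) (hjr r)
  choose T hTc hTl hTn using fun r => exists_nodup_chain' (hreach r)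
  set L : Fin l → List (Fin n) := fun r => v r :: T r with hLdef
  have hLchain : ∀ r, (L r).Chain' (AltStep 𝒜 M) := fun r => hTc r
  have hmemC : ∀ r x, x ∈ L r → x ∈ contractionOf 𝒜 M (v r) :=
    fun r x hx => chain_reaches (hTc r) hx
  have hLuniq : ∀ r r' x, x ∈ L r → x ∈ L r' → r = r' := by
    intro r r' x hx hx'
    by_contra hne
    exact Set.disjoint_left.mp (hdisj r r' hne) (hmemC r x hx) (hmemC r' x hx')
  have hMA : ∀ e ∈ M, 𝒜 e.2 e.1 = true := hM.1.1
  have Mleft : ∀ a b c : Fin n, (a, c) ∈ M → (b, c) ∈ M → a = b := by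
    intro a b c h1 h2
    by_contra hne
    exact (hM.1.2 _ h1 _ h2 (fun h => hne (congrArg Prod.fst h))).2 rfl
  have key : ∀ j : Fin n, ∃ y : Sum (Fin n) (Fin l),
      (∃ r, y = Sum.inr r ∧ ℋ r j = true) ∨
      (∃ s, y = Sum.inl s ∧ 𝒜 s j = true ∧
        ((∃ r, ∃ i : ℕ, ∃ h2 : i + 1 < (L r).length,
            (L r).get ⟨i, Nat.lt_of_succ_lt h2⟩ = j ∧ ((L r).get ⟨i + 1, h2⟩, s) ∈ M) ∨
         ((j, s) ∈ M ∧ ∀ r, j ∉ L r))) := by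
    intro j
    by_cases hp : ∃ r, j ∈ L r
    · obtain ⟨r, hjL⟩ := hp
      have hi : (L r).idxOf j < (L r).length := List.idxOf_lt_length_iff.mpr hjL
      have hnil : L r ≠ [] := List.cons_ne_nil _ _
      by_cases hlast : (L r).idxOf j = (L r).length - 1
      · have hglj : (L r).getLast hnil = jr r := by
          have := hTl r
          rw [List.getLast?_eq_getLast hnil, Option.some_inj] at this
          exact this
        have hjval : j = jr r := by
          have hfin : (⟨(L r).idxOf j, hi⟩ : Fin (L r).length) =
              ⟨(L r).length - 1, by omega⟩ := Fin.ext hlast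
          have hg : (L r).get ⟨(L r).idxOf j, hi⟩ = j := List.idxOf_get hi
          rw [← hg, hfin, ← hglj, List.getLast_eq_getElem, List.get_eq_getElem]
        refine ⟨Sum.inr r, Or.inl ⟨r, rfl, ?_⟩⟩
        rw [hjval]; exact hjr r
      · have h2 : (L r).idxOf j + 1 < (L r).length := by omega
        have hstep := List.isChain_iff_getElem.mp (hLchain r) ((L r).idxOf j) (by omega)
        have hg : (L r).get ⟨(L r).idxOf j, Nat.lt_of_succ_lt h2⟩ = j := List.idxOf_get _
        rw [show ((L r)[(L r).idxOf j]'(by omega)) = j from hg] at hstep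
        obtain ⟨s, hAs, _, hwM⟩ := hstep
        exact ⟨Sum.inl s, Or.inr ⟨s, rfl, hAs, Or.inl ⟨r, (L r).idxOf j, h2, hg, hwM⟩⟩⟩
    · push_neg at hp
      have hmatched : ∃ s, (j, s) ∈ M := by
        by_contra hns
        push_neg at hns
        have hu : UnmatchedLeft M j := by
          intro e he heq
          have he' : (e.1, e.2) ∈ M := he
          rw [heq] at he'
          exact hns e.2 he'
        obtain ⟨r, hr⟩ := hvall j hu
        refine hp r ?_
        rw [← hr]
        exact List.mem_cons_self
      obtain ⟨s, hs⟩ := hmatched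
      exact ⟨Sum.inl s, Or.inr ⟨s, rfl, hMA (j, s) hs, Or.inr ⟨hs, hp⟩⟩⟩
  choose f hf using key
  have hfinj : Function.Injective f := by
    intro j j' he
    rcases hf j with ⟨r, hy, hH⟩ | ⟨s, hy, hA, hrest⟩ <;>
      rcases hf j' with ⟨r', hy', hH'⟩ | ⟨s', hy', hA', hrest'⟩
    · have hrr : r = r' := by
        have : Sum.inr (β := Fin l) (α := Fin n) r = Sum.inr r' := by rw [← hy, ← hy', he]
        exact Sum.inr.inj this
      subst hrr
      rw [hju r j hH, hju r j' hH']
    · exfalso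
      have : Sum.inr (β := Fin l) (α := Fin n) r = Sum.inl s' := by rw [← hy, ← hy', he]
      simp at this
    · exfalso
      have : Sum.inl (β := Fin l) (α := Fin n) s = Sum.inr r' := by rw [← hy, ← hy', he]
      simp at this
    · have hss : s = s' := by
        have : Sum.inl (β := Fin l) (α := Fin n) s = Sum.inl s' := by rw [← hy, ← hy', he]
        exact Sum.inl.inj this
      subst hss
      rcases hrest with ⟨r, i, h2, hget, hwM⟩ | ⟨hjM, hnp⟩ <;>
        rcases hrest' with ⟨r', i', h2', hget', hwM'⟩ | ⟨hjM', hnp'⟩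
      · have hww : (L r).get ⟨i + 1, h2⟩ = (L r').get ⟨i' + 1, h2'⟩ := Mleft _ _ _ hwM hwM'
        have hrr : r = r' := by
          refine hLuniq r r' ((L r).get ⟨i + 1, h2⟩) (List.get_mem (L r) ⟨i + 1, h2⟩) ?_
          rw [hww]; exact List.get_mem (L r') ⟨i' + 1, h2'⟩
        subst hrr
        have hinj : Function.Injective (L r).get := List.nodup_iff_injective_get.mp (hTn r)
        have hfe : (⟨i + 1, h2⟩ : Fin (L r).length) = ⟨i' + 1, h2'⟩ := hinj hww
        have hii : i = i' := by
          have := Fin.mk.injEq .. ▸ hfe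
          simpa using this
        subst hii
        rw [← hget, ← hget']
      · exfalso
        have hj'w : j' = (L r).get ⟨i + 1, h2⟩ := Mleft _ _ _ hjM' hwM
        exact hnp' r (hj'w ▸ List.get_mem (L r) ⟨i + 1, h2⟩)
      · exfalso
        have hjw : j = (L r').get ⟨i' + 1, h2'⟩ := Mleft _ _ _ hjM hwM'
        exact hnp r' (hjw ▸ List.get_mem (L r') ⟨i' + 1, h2'⟩)
      · exact Mleft _ _ _ hjM hjM'
  have hub : ∀ k ∈ {k : ℕ | ∃ (r : Fin k → Fin n ⊕ Fin l) (c : Fin k → Fin n),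
      Function.Injective r ∧ Function.Injective c ∧
        ∀ i, Matrix.fromRows 𝒜 ℋ (r i) (c i) = true}, k ≤ n := by
    rintro k ⟨rk, ck, _, hck, _⟩
    simpa using Fintype.card_le_of_injective ck hck
  have hmem : n ∈ {k : ℕ | ∃ (r : Fin k → Fin n ⊕ Fin l) (c : Fin k → Fin n),
      Function.Injective r ∧ Function.Injective c ∧
        ∀ i, Matrix.fromRows 𝒜 ℋ (r i) (c i) = true} := by
    refine ⟨f, id, hfinj, Function.injective_id, ?_⟩
    intro i
    rcases hf i with ⟨r, hy, hH⟩ | ⟨s, hy, hA, _⟩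
    · rw [hy]; simpa using hH
    · rw [hy]; simpa using hA
  exact IsGreatest.csSup_eq ⟨hmem, hub⟩
end
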